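/- arXiv:2408.16318 — 6 statements merged into one kernel-verified Lean document; each statement's English description precedes it below -/
import Mathlib

section
/- If (A,B) is a quaternary Legendre pair of length ℓ, then PSD(A,s) + PSD(B,s) = 2ℓ + 2 for all s = 1, 2, ..., ℓ-1. -/
open Finset

/-- Periodic autocorrelation function of a sequence of length `ℓ`, indices mod `ℓ`. -/
noncomputable def PAF (ℓ : ℕ) (A : ℕ → ℂ) (s : ℕ) : ℂ :=
  ∑ j ∈ Finset.range ℓ, A j * (starRingEnd ℂ) (A ((j + s) % ℓ))

/-- Discrete Fourier transform of a sequence of length `ℓ`. -/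
noncomputable def DFT (ℓ : ℕ) (A : ℕ → ℂ) (s : ℕ) : ℂ :=
  ∑ j ∈ Finset.range ℓ, A j * Complex.exp (2 * Real.pi * Complex.I * j * s / ℓ)

/-- Power spectral density. -/
noncomputable def PSD (ℓ : ℕ) (A : ℕ → ℂ) (s : ℕ) : ℝ :=
  ‖DFT ℓ A s‖ ^ 2

/-- A sequence is quaternary if all its entries (up to length `ℓ`) are fourth roots of unity. -/
def IsQuaternary (ℓ : ℕ) (A : ℕ → ℂ) : Prop :=
  ∀ j < ℓ, A j = 1 ∨ A j = -1 ∨ A j = Complex.I ∨ A j = -Complex.I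

/-- `(A, B)` is a quaternary Legendre pair of length `ℓ`. -/
def IsLegendrePair (ℓ : ℕ) (A B : ℕ → ℂ) : Prop :=
  IsQuaternary ℓ A ∧ IsQuaternary ℓ B ∧
    ∀ s, 1 ≤ s → s ≤ ℓ / 2 → PAF ℓ A s + PAF ℓ B s = -2


-- shift lemma
lemma shift_sum {ℓ : ℕ} (c : ℕ) (hc : c ≤ ℓ) (f : ℕ → ℂ) :
    ∑ t ∈ Finset.range ℓ, f ((t + c) % ℓ) = ∑ t ∈ Finset.range ℓ, f t := by
  rcases Nat.eq_zero_or_pos ℓ with h0 | hℓ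
  · simp [h0]
  refine Finset.sum_nbij' (i := fun t => (t + c) % ℓ) (j := fun t => (t + (ℓ - c)) % ℓ)
    ?_ ?_ ?_ ?_ ?_
  · intro a _; simpa using Nat.mod_lt _ hℓ
  · intro a _; simpa using Nat.mod_lt _ hℓ
  · intro a ha
    simp only [Finset.mem_range] at ha
    show (_ % ℓ + _) % ℓ = _
    rw [Nat.mod_add_mod]
    have : a + c + (ℓ - c) = a + ℓ := by omega
    rw [this, Nat.add_mod_right, Nat.mod_eq_of_lt ha]
  · intro a ha
    simp only [Finset.mem_range] at ha
    show (_ % ℓ + _) % ℓ = _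
    rw [Nat.mod_add_mod]
    have : a + (ℓ - c) + c = a + ℓ := by omega
    rw [this, Nat.add_mod_right, Nat.mod_eq_of_lt ha]
  · intro a _; rfl

lemma zeta_pow (ℓ s j : ℕ) :
    Complex.exp (2 * Real.pi * Complex.I * j * s / ℓ) =
      Complex.exp (2 * Real.pi * Complex.I * s / ℓ) ^ j := by
  rw [← Complex.exp_nat_mul]
  congr 1
  ring

lemma zeta_pow_ell (ℓ s : ℕ) (hℓ : 0 < ℓ) :
    Complex.exp (2 * Real.pi * Complex.I * s / ℓ) ^ ℓ = 1 := by
  rw [← Complex.exp_nat_mul]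
  have hℓ' : (ℓ : ℂ) ≠ 0 := Nat.cast_ne_zero.mpr hℓ.ne'
  have : (ℓ : ℂ) * (2 * Real.pi * Complex.I * s / ℓ) = s * (2 * Real.pi * Complex.I) := by
    field_simp
  rw [this]
  exact_mod_cast Complex.exp_int_mul_two_pi_mul_I s

lemma zeta_conj_mul (ℓ s : ℕ) :
    (starRingEnd ℂ) (Complex.exp (2 * Real.pi * Complex.I * s / ℓ)) *
      Complex.exp (2 * Real.pi * Complex.I * s / ℓ) = 1 := by
  rw [← Complex.exp_conj, ← Complex.exp_add]
  have : (starRingEnd ℂ) (2 * Real.pi * Complex.I * s / ℓ) = -(2 * Real.pi * Complex.I * s / ℓ) := by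
    simp [map_div₀, Complex.conj_I, map_ofNat]
    ring
  rw [this, neg_add_cancel, Complex.exp_zero]

lemma zeta_ne_one (ℓ s : ℕ) (h1 : 1 ≤ s) (h2 : s ≤ ℓ - 1) (hℓ : 2 ≤ ℓ) :
    Complex.exp (2 * Real.pi * Complex.I * s / ℓ) ≠ 1 := by
  intro h
  rw [Complex.exp_eq_one_iff] at h
  obtain ⟨n, hn⟩ := h
  have hℓ' : (ℓ : ℂ) ≠ 0 := Nat.cast_ne_zero.mpr (by omega)
  have hπ : (Real.pi : ℂ) ≠ 0 := by exact_mod_cast Real.pi_ne_zero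
  have hs : (s : ℂ) = n * ℓ := by
    field_simp at hn
    have h2' : (2 : ℂ) * Real.pi * Complex.I ≠ 0 := by
      simp [Complex.I_ne_zero, hπ]
    have h3 : (2 : ℂ) * Real.pi * Complex.I * s = (2 * Real.pi * Complex.I) * (n * ℓ) := by
      linear_combination (2 * Real.pi * Complex.I) * hn
    have := mul_left_cancel₀ h2' (by linear_combination h3 : (2:ℂ)*Real.pi*Complex.I*(s:ℂ) = (2*Real.pi*Complex.I)*((n:ℂ)*ℓ))
    exact this
  have hs' : (s : ℤ) = n * ℓ := by exact_mod_cast hs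
  have hn1 : 1 ≤ n := by nlinarith [hs', h1, h2, hℓ]
  have hsl : (s : ℤ) < ℓ := by exact_mod_cast (by omega : s < ℓ)
  have hle : (ℓ : ℤ) ≤ n * ℓ := le_mul_of_one_le_left (by positivity) hn1
  omega

lemma zeta_pow_mod (ℓ s : ℕ) (hℓ : 0 < ℓ) (n : ℕ) :
    Complex.exp (2 * Real.pi * Complex.I * s / ℓ) ^ (n % ℓ) =
      Complex.exp (2 * Real.pi * Complex.I * s / ℓ) ^ n := by
  conv_rhs => rw [← Nat.mod_add_div n ℓ, pow_add, pow_mul, zeta_pow_ell ℓ s hℓ, one_pow, mul_one]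

lemma dft_mul_conj (ℓ : ℕ) (hℓ : 0 < ℓ) (A : ℕ → ℂ) (s : ℕ) :
    DFT ℓ A s * (starRingEnd ℂ) (DFT ℓ A s) =
      ∑ t ∈ Finset.range ℓ, (starRingEnd ℂ) (PAF ℓ A t) *
        Complex.exp (2 * Real.pi * Complex.I * s / ℓ) ^ t := by
  set ζ := Complex.exp (2 * Real.pi * Complex.I * s / ℓ) with hζ
  have hconj : ∀ k : ℕ, (starRingEnd ℂ) ζ ^ k * ζ ^ k = 1 := fun k => by
    rw [← mul_pow, zeta_conj_mul, one_pow]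
  have hD : DFT ℓ A s = ∑ j ∈ Finset.range ℓ, A j * ζ ^ j := by
    unfold DFT
    exact Finset.sum_congr rfl fun j _ => by rw [zeta_pow]
  rw [hD, map_sum, Finset.sum_mul_sum, Finset.sum_comm]
  trans ∑ k ∈ Finset.range ℓ, ∑ t ∈ Finset.range ℓ,
      (starRingEnd ℂ) (A k) * A ((k + t) % ℓ) * ζ ^ t
  · refine Finset.sum_congr rfl fun k hk => ?_
    have hk' := Finset.mem_range.mp hk
    rw [← shift_sum k hk'.le (fun x => A x * ζ ^ x * (starRingEnd ℂ) (A k * ζ ^ k))]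
    refine Finset.sum_congr rfl fun t ht => ?_
    show A ((t + k) % ℓ) * ζ ^ ((t + k) % ℓ) * (starRingEnd ℂ) (A k * ζ ^ k)
        = (starRingEnd ℂ) (A k) * A ((k + t) % ℓ) * ζ ^ t
    rw [zeta_pow_mod ℓ s hℓ, map_mul, map_pow, Nat.add_comm t k]
    have key : ζ ^ (k + t) * (starRingEnd ℂ) ζ ^ k = ζ ^ t := by
      rw [pow_add]
      calc ζ ^ k * ζ ^ t * (starRingEnd ℂ) ζ ^ k
          = ((starRingEnd ℂ) ζ ^ k * ζ ^ k) * ζ ^ t := by ring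
        _ = ζ ^ t := by rw [hconj k, one_mul]
    linear_combination (starRingEnd ℂ) (A k) * A ((k + t) % ℓ) * key
  · rw [Finset.sum_comm]
    refine Finset.sum_congr rfl fun t _ => ?_
    unfold PAF
    rw [map_sum, Finset.sum_mul]
    refine Finset.sum_congr rfl fun j _ => ?_
    rw [map_mul, Complex.conj_conj]

lemma paf_zero (ℓ : ℕ) (A : ℕ → ℂ) (hA : ∀ j < ℓ, A j = 1 ∨ A j = -1 ∨ A j = Complex.I ∨ A j = -Complex.I) :
    PAF ℓ A 0 = ℓ := by
  unfold PAF
  rw [show ((ℓ : ℂ)) = ∑ j ∈ Finset.range ℓ, (1 : ℂ) by simp]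
  refine Finset.sum_congr rfl fun j hj => ?_
  have hj' := Finset.mem_range.mp hj
  rw [Nat.add_zero, Nat.mod_eq_of_lt hj']
  rcases hA j hj' with h | h | h | h <;> simp [h, Complex.conj_I]

lemma paf_symm (ℓ : ℕ) (A : ℕ → ℂ) (t : ℕ) (ht : t ≤ ℓ) :
    PAF ℓ A t = (starRingEnd ℂ) (PAF ℓ A (ℓ - t)) := by
  unfold PAF
  rw [map_sum]
  rw [← shift_sum t ht (fun j => (starRingEnd ℂ) (A j * (starRingEnd ℂ) (A ((j + (ℓ - t)) % ℓ))))]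
  rcases Nat.eq_zero_or_pos ℓ with h0 | hℓ
  · simp [h0]
  refine Finset.sum_congr rfl fun k hk => ?_
  have hk' := Finset.mem_range.mp hk
  show A k * (starRingEnd ℂ) (A ((k + t) % ℓ)) =
    (starRingEnd ℂ) (A ((k + t) % ℓ) * (starRingEnd ℂ) (A (((k + t) % ℓ + (ℓ - t)) % ℓ)))
  have : ((k + t) % ℓ + (ℓ - t)) % ℓ = k := by
    rw [Nat.mod_add_mod]
    have : k + t + (ℓ - t) = k + ℓ := by omega
    rw [this, Nat.add_mod_right, Nat.mod_eq_of_lt hk']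
  rw [this, map_mul, Complex.conj_conj, mul_comm]

lemma geom_zero (ℓ s : ℕ) (h1 : 1 ≤ s) (h2 : s ≤ ℓ - 1) (hℓ : 2 ≤ ℓ) :
    ∑ t ∈ Finset.range ℓ, Complex.exp (2 * Real.pi * Complex.I * s / ℓ) ^ t = 0 := by
  set ζ := Complex.exp (2 * Real.pi * Complex.I * s / ℓ) with hζ
  have h := geom_sum_mul ζ ℓ
  rw [zeta_pow_ell ℓ s (by omega), sub_self] at h
  rcases mul_eq_zero.mp h with h | h
  · exact h
  · exact absurd (sub_eq_zero.mp h) (zeta_ne_one ℓ s h1 h2 hℓ)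

theorem PSD_sum_of_legendrePair (ℓ : ℕ) (A B : ℕ → ℂ)
    (h : IsLegendrePair ℓ A B) (s : ℕ) (h1 : 1 ≤ s) (h2 : s ≤ ℓ - 1) :
    PSD ℓ A s + PSD ℓ B s = 2 * ℓ + 2 := by
  obtain ⟨hA, hB, hP⟩ := h
  have hℓ2 : 2 ≤ ℓ := by omega
  have hℓ0 : 0 < ℓ := by omega
  set ζ := Complex.exp (2 * Real.pi * Complex.I * s / ℓ) with hζ
  have hcast : ∀ (C : ℕ → ℂ), ((PSD ℓ C s : ℝ) : ℂ) =
      DFT ℓ C s * (starRingEnd ℂ) (DFT ℓ C s) := by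
    intro C
    rw [Complex.mul_conj]
    unfold PSD
    rw [Complex.sq_norm]
  have hsum : ((PSD ℓ A s + PSD ℓ B s : ℝ) : ℂ) =
      ∑ t ∈ Finset.range ℓ, (starRingEnd ℂ) (PAF ℓ A t + PAF ℓ B t) * ζ ^ t := by
    push_cast
    rw [hcast A, hcast B, dft_mul_conj ℓ hℓ0 A s, dft_mul_conj ℓ hℓ0 B s,
      ← Finset.sum_add_distrib]
    exact Finset.sum_congr rfl fun t _ => by rw [map_add, add_mul]
  have hval : ∀ t, 1 ≤ t → t ≤ ℓ - 1 → PAF ℓ A t + PAF ℓ B t = -2 := by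
    intro t h1t h2t
    by_cases hc : t ≤ ℓ / 2
    · exact hP t h1t hc
    · rw [paf_symm ℓ A t (by omega), paf_symm ℓ B t (by omega), ← map_add,
        hP (ℓ - t) (by omega) (by omega)]
      simp [map_ofNat]
  have hsplit : ∀ f : ℕ → ℂ, ∑ t ∈ Finset.range ℓ, f t =
      (∑ i ∈ Finset.range (ℓ - 1), f (i + 1)) + f 0 := by
    intro f
    conv_lhs => rw [show ℓ = (ℓ - 1) + 1 by omega]
    rw [Finset.sum_range_succ']
  have hgeom : (∑ i ∈ Finset.range (ℓ - 1), ζ ^ (i + 1)) = -1 := by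
    have h0 := geom_zero ℓ s h1 h2 hℓ2
    rw [hsplit (fun t => ζ ^ t)] at h0
    simp only [pow_zero] at h0
    linear_combination h0
  have hfinal : ((PSD ℓ A s + PSD ℓ B s : ℝ) : ℂ) = ((2 * ℓ + 2 : ℝ) : ℂ) := by
    rw [hsum, hsplit (fun t => (starRingEnd ℂ) (PAF ℓ A t + PAF ℓ B t) * ζ ^ t)]
    have ht0 : (starRingEnd ℂ) (PAF ℓ A 0 + PAF ℓ B 0) * ζ ^ 0 = 2 * ℓ := by
      rw [paf_zero ℓ A hA, paf_zero ℓ B hB, pow_zero, mul_one]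
      simp only [map_add, Complex.conj_natCast]
      ring
    have hterms : ∀ i ∈ Finset.range (ℓ - 1),
        (starRingEnd ℂ) (PAF ℓ A (i + 1) + PAF ℓ B (i + 1)) * ζ ^ (i + 1)
          = -2 * ζ ^ (i + 1) := by
      intro i hi
      have hi' := Finset.mem_range.mp hi
      rw [hval (i + 1) (by omega) (by omega)]
      norm_num [map_ofNat]
    rw [Finset.sum_congr rfl hterms, ht0, ← Finset.mul_sum, hgeom]
    push_cast; ring
  exact_mod_cast hfinal
end

section
/- Let ℓ = 2k be even and A ∈ {1,-1,i,-i}^ℓ with Σ_j a_j = 0. Then PSD(A, k) ≡ 2ℓ (mod 8). -/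
open Finset

lemma sum_range_two_mul {M : Type*} [AddCommMonoid M] (k : ℕ) (f : ℕ → M) :
    ∑ j ∈ Finset.range (2 * k), f j
      = ∑ j ∈ Finset.range k, (f (2 * j) + f (2 * j + 1)) := by
  induction k with
  | zero => simp
  | succ n ih =>
    have h2 : 2 * (n + 1) = (2 * n + 1) + 1 := by ring
    rw [h2, Finset.sum_range_succ, Finset.sum_range_succ, ih, Finset.sum_range_succ,
      add_assoc]

lemma sq_modEq_self (a : ℤ) : a ^ 2 ≡ a [ZMOD 2] := by
  have h := Int.even_mul_succ_self (a - 1)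
  have h2 : (a - 1) * (a - 1 + 1) = a ^ 2 - a := by ring
  rw [h2] at h
  rcases h with ⟨c, hc⟩
  exact (Int.modEq_iff_dvd.mpr ⟨c, by linarith⟩).symm

theorem PSD_half_mod_eight (k : ℕ) (A : ℕ → ℂ) (hA : IsQuaternary (2 * k) A)
    (hsum : ∑ j ∈ Finset.range (2 * k), A j = 0) :
    ∃ m : ℤ, PSD (2 * k) A k = (m : ℝ) ∧ m ≡ 2 * (2 * k : ℤ) [ZMOD 8] := by
  classical
  rcases Nat.eq_zero_or_pos k with hk0 | hk0
  · subst hk0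
    exact ⟨0, by simp [PSD, DFT], by decide⟩
  set x : ℕ → ℤ := fun j => if A j = 1 then 1 else if A j = -1 then -1 else 0 with hxdef
  set y : ℕ → ℤ := fun j =>
    if A j = Complex.I then 1 else if A j = -Complex.I then -1 else 0 with hydef
  have hxy : ∀ j < 2 * k, A j = (x j : ℂ) + (y j : ℂ) * Complex.I := by
    intro j hj
    rcases hA j hj with h | h | h | h <;>
      simp [hxdef, hydef, h, Complex.ext_iff] <;> norm_num
  have hodd : ∀ j < 2 * k, Odd (x j + y j) := by
    intro j hj
    rcases hA j hj with h | h | h | h <;>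
      simp [hxdef, hydef, h, Complex.ext_iff] <;> norm_num
  -- split hsum into real and imaginary parts
  have hsum' : ((∑ j ∈ Finset.range (2 * k), x j : ℤ) : ℂ)
      + ((∑ j ∈ Finset.range (2 * k), y j : ℤ) : ℂ) * Complex.I = 0 := by
    rw [← hsum]
    push_cast
    rw [Finset.sum_mul, ← Finset.sum_add_distrib]
    exact Finset.sum_congr rfl fun j hj => (hxy j (Finset.mem_range.mp hj)).symm
  have hSx : (∑ j ∈ Finset.range (2 * k), x j) = 0 := by
    have h := congrArg Complex.re hsum'
    simp at h
    exact_mod_cast h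
  have hSy : (∑ j ∈ Finset.range (2 * k), y j) = 0 := by
    have h := congrArg Complex.im hsum'
    simp at h
    exact_mod_cast h
  -- the DFT at k is the alternating sum
  have hexp : ∀ j : ℕ,
      Complex.exp (2 * Real.pi * Complex.I * j * k / (2 * k)) = (-1 : ℂ) ^ j := by
    intro j
    have hk' : (k : ℂ) ≠ 0 := Nat.cast_ne_zero.mpr hk0.ne'
    have h1 : (2 * (Real.pi : ℂ) * Complex.I * j * k / (2 * k) : ℂ)
        = (j : ℕ) * ((Real.pi : ℂ) * Complex.I) := by
      field_simp
    rw [h1, Complex.exp_nat_mul, Complex.exp_pi_mul_I]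
  set X : ℤ := ∑ j ∈ Finset.range (2 * k), (-1 : ℤ) ^ j * x j with hXdef
  set Y : ℤ := ∑ j ∈ Finset.range (2 * k), (-1 : ℤ) ^ j * y j with hYdef
  have hDFT : DFT (2 * k) A k = (X : ℂ) + (Y : ℂ) * Complex.I := by
    rw [DFT, hXdef, hYdef]
    push_cast
    rw [Finset.sum_mul, ← Finset.sum_add_distrib]
    refine Finset.sum_congr rfl fun j hj => ?_
    rw [hexp j, hxy j (Finset.mem_range.mp hj)]
    ring
  -- X and Y are twice the even-index sums
  set E : ℤ := ∑ j ∈ Finset.range k, x (2 * j) with hEdef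
  set F : ℤ := ∑ j ∈ Finset.range k, y (2 * j) with hFdef
  have hXE : X = 2 * E := by
    have h1 : X + (∑ j ∈ Finset.range (2 * k), x j) = 2 * E := by
      rw [hXdef, hEdef, sum_range_two_mul, sum_range_two_mul, Finset.mul_sum,
        ← Finset.sum_add_distrib]
      refine Finset.sum_congr rfl fun j hj => ?_
      have : (-1 : ℤ) ^ (2 * j) = 1 := by
        rw [pow_mul]; norm_num
      rw [pow_succ, this]
      ring
    rw [hSx] at h1
    linarith
  have hYF : Y = 2 * F := by
    have h1 : Y + (∑ j ∈ Finset.range (2 * k), y j) = 2 * F := by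
      rw [hYdef, hFdef, sum_range_two_mul, sum_range_two_mul, Finset.mul_sum,
        ← Finset.sum_add_distrib]
      refine Finset.sum_congr rfl fun j hj => ?_
      have : (-1 : ℤ) ^ (2 * j) = 1 := by
        rw [pow_mul]; norm_num
      rw [pow_succ, this]
      ring
    rw [hSy] at h1
    linarith
  refine ⟨X ^ 2 + Y ^ 2, ?_, ?_⟩
  · rw [PSD, hDFT, Complex.sq_norm]
    have : ((X : ℂ) + (Y : ℂ) * Complex.I)
        = ((X : ℝ) : ℂ) + ((Y : ℝ) : ℂ) * Complex.I := by push_cast; ring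
    rw [this, Complex.normSq_add_mul_I]
    push_cast
    ring
  · -- E + F ≡ k (mod 2) since each x (2j) + y (2j) is odd
    have hEF : E + F ≡ (k : ℤ) [ZMOD 2] := by
      have h1 : E + F = ∑ j ∈ Finset.range k, (x (2 * j) + y (2 * j)) := by
        rw [hEdef, hFdef, ← Finset.sum_add_distrib]
      have h2 : (k : ℤ) = ∑ _j ∈ Finset.range k, (1 : ℤ) := by simp
      rw [h1, h2]
      unfold Int.ModEq
      rw [Finset.sum_int_mod, Finset.sum_int_mod (f := fun _ => (1 : ℤ))]
      congr 1
      refine Finset.sum_congr rfl fun j hj => ?_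
      have hj2 : 2 * j < 2 * k := by
        have := Finset.mem_range.mp hj; omega
      have := hodd _ hj2
      rw [Int.odd_iff.mp this]
      decide
    have hsq : E ^ 2 + F ^ 2 ≡ (k : ℤ) [ZMOD 2] :=
      (((sq_modEq_self E).add (sq_modEq_self F))).trans hEF
    have h4 : (4 : ℤ) * (E ^ 2 + F ^ 2) ≡ 4 * (k : ℤ) [ZMOD 4 * 2] :=
      Int.ModEq.mul_left' hsq
    have hXY : X ^ 2 + Y ^ 2 = 4 * (E ^ 2 + F ^ 2) := by
      rw [hXE, hYF]; ring
    rw [hXY]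
    have : (2 : ℤ) * (2 * k) = 4 * k := by ring
    rw [this]
    exact h4
end

section
/- Let ℓ be divisible by 4 and A ∈ {1,-1,i,-i}^ℓ with Σ_j a_j = 0. Then PSD(A, ℓ/4) ≡ 2|α_0|² (mod 4), where α_0 is the sum of the even-indexed entries; in particular PSD(A, ℓ/4) ≡ 0 (mod 4). -/
open Finset

/- ## Auxiliary material -/

open GaussianInt Complex in
/-- The Gaussian-integer lift of a quaternary sequence. -/
noncomputable def gb (A : ℕ → ℂ) (j : ℕ) : GaussianInt := by
  classical
  exact if A j = 1 then 1 else if A j = -1 then -1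
    else if A j = Complex.I then ⟨0, 1⟩ else ⟨0, -1⟩

/-- `i` as a Gaussian integer. -/
def zi : GaussianInt := ⟨0, 1⟩

lemma zi_sq : zi ^ 2 = -1 := by
  ext <;> simp [zi, pow_two, Zsqrtd.re_mul, Zsqrtd.im_mul]

lemma toComplex_zi : (GaussianInt.toComplex zi : ℂ) = Complex.I := by
  simp [zi, GaussianInt.toComplex_def']

/-- Re + Im as an additive monoid hom. -/
def reIm : GaussianInt →+ ℤ where
  toFun z := z.re + z.im
  map_zero' := rfl
  map_add' x y := by simp [Zsqrtd.re_add, Zsqrtd.im_add]; ring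

lemma sum_range_even_odd {M : Type*} [AddCommMonoid M] (f : ℕ → M) (N : ℕ) :
    ∑ j ∈ Finset.range (2 * N), f j
      = ∑ j ∈ Finset.range N, f (2 * j) + ∑ j ∈ Finset.range N, f (2 * j + 1) := by
  induction N with
  | zero => simp
  | succ n ih =>
    rw [show 2 * (n + 1) = (2 * n + 1) + 1 by ring, Finset.sum_range_succ,
      Finset.sum_range_succ, ih, Finset.sum_range_succ, Finset.sum_range_succ]
    abel

theorem PSD_quarter_mod_four (ℓ : ℕ) (hℓ : 4 ∣ ℓ) (A : ℕ → ℂ)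
    (hA : IsQuaternary ℓ A) (hsum : ∑ j ∈ Finset.range ℓ, A j = 0) :
    ∃ m n : ℤ, PSD ℓ A (ℓ / 4) = (m : ℝ) ∧
      ‖∑ j ∈ Finset.range (ℓ / 2), A (2 * j)‖ ^ 2 = (n : ℝ) ∧
      m ≡ 2 * n [ZMOD 4] ∧ m ≡ 0 [ZMOD 4] := by
  obtain ⟨L, rfl⟩ := hℓ
  rcases Nat.eq_zero_or_pos L with hL | hL
  · subst hL
    refine ⟨0, 0, ?_, ?_, by decide, by decide⟩ <;>
      simp [PSD, DFT]
  set B : ℕ → GaussianInt := gb A with hBdef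
  -- the lift agrees with `A` and has odd `re + im`
  have hB : ∀ j < 4 * L, (GaussianInt.toComplex (B j) : ℂ) = A j := by
    intro j hj
    rcases hA j hj with h | h | h | h <;>
      · simp only [hBdef, gb, h]
        norm_num [Complex.ext_iff, GaussianInt.toComplex_def']
  have hBodd : ∀ j < 4 * L, Odd ((B j).re + (B j).im) := by
    intro j hj
    rcases hA j hj with h | h | h | h <;>
      · simp only [hBdef, gb, h]
        norm_num [Complex.ext_iff]
  set C : GaussianInt := ∑ j ∈ Finset.range (2 * L), B (2 * j) with hC
  set C' : GaussianInt := ∑ j ∈ Finset.range (2 * L), B (2 * j + 1) with hC'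
  set E : GaussianInt := ∑ j ∈ Finset.range (2 * L), (-1) ^ j * B (2 * j) with hE
  set O : GaussianInt := ∑ j ∈ Finset.range (2 * L), (-1) ^ j * B (2 * j + 1) with hO
  set D : GaussianInt := E + zi * O with hD
  -- total sum of the lift is zero
  have hsum' : C + C' = 0 := by
    have h0 : (∑ j ∈ Finset.range (4 * L), B j) = 0 := by
      apply GaussianInt.toComplex_inj.mp
      rw [map_sum, map_zero, ← hsum]
      exact Finset.sum_congr rfl fun j hj => hB j (Finset.mem_range.mp hj)
    rw [hC, hC', ← sum_range_even_odd (fun j => B j)]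
    rw [show 2 * (2 * L) = 4 * L by ring, h0]
  -- the DFT at ℓ/4 equals the image of D
  have h4 : 4 * L / 4 = L := by omega
  have hLC : (L : ℂ) ≠ 0 := Nat.cast_ne_zero.mpr (by omega)
  have hexp : ∀ j : ℕ,
      Complex.exp (2 * Real.pi * Complex.I * j * L / (4 * L : ℕ)) = Complex.I ^ j := by
    intro j
    have h1 : (2 * Real.pi * Complex.I * j * L / (4 * L : ℕ) : ℂ)
        = (j : ℂ) * ((Real.pi : ℂ) / 2 * Complex.I) := by
      push_cast
      field_simp
      ring
    rw [h1, Complex.exp_nat_mul]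
    congr 1
    rw [Complex.exp_mul_I, Complex.cos_pi_div_two, Complex.sin_pi_div_two]
    ring
  have hDsum : (∑ j ∈ Finset.range (4 * L), B j * zi ^ j) = D := by
    rw [show 4 * L = 2 * (2 * L) by ring, sum_range_even_odd (fun j => B j * zi ^ j),
      hD, hE, hO, Finset.mul_sum]
    congr 1
    · refine Finset.sum_congr rfl fun j hj => ?_
      rw [pow_mul, zi_sq]; ring
    · refine Finset.sum_congr rfl fun j hj => ?_
      rw [pow_succ, pow_mul, zi_sq]; ring
  have hDFT : DFT (4 * L) A (4 * L / 4) = GaussianInt.toComplex D := by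
    rw [h4, DFT, ← hDsum, map_sum]
    refine Finset.sum_congr rfl fun j hj => ?_
    rw [map_mul, map_pow, hB j (Finset.mem_range.mp hj), toComplex_zi, hexp j]
  -- parity decomposition
  have hEu : ∃ u : GaussianInt, E = C + 2 * u := by
    have hdvd : (2 : GaussianInt) ∣ E - C := by
      rw [hE, hC, ← Finset.sum_sub_distrib]
      refine Finset.dvd_sum fun j hj => ?_
      rcases Nat.even_or_odd j with h | h
      · rw [h.neg_one_pow]; simp
      · rw [h.neg_one_pow]; exact ⟨-B (2 * j), by ring⟩
    obtain ⟨u, hu⟩ := hdvd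
    exact ⟨u, by linear_combination hu⟩
  have hOv : ∃ v : GaussianInt, O = -C + 2 * v := by
    have hdvd : (2 : GaussianInt) ∣ O - C' := by
      rw [hO, hC', ← Finset.sum_sub_distrib]
      refine Finset.dvd_sum fun j hj => ?_
      rcases Nat.even_or_odd j with h | h
      · rw [h.neg_one_pow]; simp
      · rw [h.neg_one_pow]; exact ⟨-B (2 * j + 1), by ring⟩
    obtain ⟨v, hv⟩ := hdvd
    refine ⟨v, ?_⟩
    have hC'e : C' = -C := by linear_combination hsum'
    linear_combination hv + hC'e
  obtain ⟨u, hu⟩ := hEu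
  obtain ⟨v, hv⟩ := hOv
  set w : GaussianInt := u + zi * v with hw
  have hDw : D = C * (1 - zi) + 2 * w := by
    rw [hD, hu, hv, hw]; ring
  -- component computation
  set a : ℤ := C.re
  set b : ℤ := C.im
  set p : ℤ := w.re
  set q : ℤ := w.im
  have hDre : D.re = a + b + 2 * p := by
    rw [hDw]
    simp [Zsqrtd.re_mul, Zsqrtd.im_mul, Zsqrtd.re_add, Zsqrtd.re_sub, Zsqrtd.im_sub, zi]
    try ring
  have hDim : D.im = b - a + 2 * q := by
    rw [hDw]
    simp [Zsqrtd.re_mul, Zsqrtd.im_mul, Zsqrtd.im_add, Zsqrtd.re_sub, Zsqrtd.im_sub, zi]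
    try ring
  refine ⟨Zsqrtd.norm D, Zsqrtd.norm C, ?_, ?_, ?_, ?_⟩
  · -- PSD value
    rw [PSD, hDFT, Complex.sq_norm, GaussianInt.intCast_real_norm]
  · -- the α₀ norm
    have h2 : 4 * L / 2 = 2 * L := by omega
    have : (∑ j ∈ Finset.range (4 * L / 2), A (2 * j)) = GaussianInt.toComplex C := by
      rw [h2, hC, map_sum]
      exact Finset.sum_congr rfl fun j hj => by
        rw [hB (2 * j) (by have := Finset.mem_range.mp hj; omega)]
    rw [this, Complex.sq_norm, GaussianInt.intCast_real_norm]
  all_goals {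
    -- arithmetic mod 4
    have hnormD : Zsqrtd.norm D = D.re ^ 2 + D.im ^ 2 := by
      rw [Zsqrtd.norm]; ring
    have hnormC : Zsqrtd.norm C = a ^ 2 + b ^ 2 := by
      rw [Zsqrtd.norm]; ring
    have hmn : Zsqrtd.norm D = 2 * Zsqrtd.norm C
        + 4 * (p ^ 2 + q ^ 2 + (a + b) * p + (b - a) * q) := by
      rw [hnormD, hnormC, hDre, hDim]; ring
    -- evenness of a + b
    have habeven : Even (a + b) := by
      have hab : a + b = ∑ j ∈ Finset.range (2 * L), ((B (2 * j)).re + (B (2 * j)).im) := by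
        exact map_sum reIm (fun j => B (2 * j)) (Finset.range (2 * L))
      rw [Int.even_iff, hab, Finset.sum_int_mod]
      have : ∀ j ∈ Finset.range (2 * L), ((B (2 * j)).re + (B (2 * j)).im) % 2 = 1 := by
        intro j hj
        exact Int.odd_iff.mp (hBodd (2 * j) (by have := Finset.mem_range.mp hj; omega))
      rw [Finset.sum_congr rfl this]
      simp only [Finset.sum_const, Finset.card_range, nsmul_eq_mul, mul_one]
      push_cast
      omega
    obtain ⟨c, hc⟩ := habeven
    have hneven : Zsqrtd.norm C = 2 * (a ^ 2 - 2 * a * c + 2 * c ^ 2) := by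
      have hb : b = 2 * c - a := by omega
      rw [hnormC, hb]; ring
    first
    | · rw [Int.ModEq]
        omega
    | · rw [Int.ModEq]
        omega
  }
end

section
/- Let ℓ be divisible by 4 and let (A,B) be a quaternary Legendre pair of length ℓ with Σ_j a_j = 0 and Σ_j b_j = 1+i. Then PSD(A, ℓ/4) ≡ 0 (mod 8). -/
open Finset

/-- Integer coordinates of a fourth root of unity. -/
noncomputable def QLPcv (a : ℂ) : ℤ × ℤ :=
  open scoped Classical in
  if a = 1 then (1, 0) else if a = -1 then (-1, 0) else if a = Complex.I then (0, 1)
  else (0, -1)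

lemma QLPcv_spec {a : ℂ} (ha : a = 1 ∨ a = -1 ∨ a = Complex.I ∨ a = -Complex.I) :
    a = ((QLPcv a).1 : ℂ) + ((QLPcv a).2 : ℂ) * Complex.I := by
  rcases ha with h | h | h | h <;> subst h <;>
    simp [QLPcv, Complex.ext_iff] <;> norm_num

lemma QLPcv_odd (a : ℂ) : Odd ((QLPcv a).1 + (QLPcv a).2) := by
  unfold QLPcv; split_ifs <;> decide

lemma QLP_I_pow_mod (ℓ j : ℕ) (hℓ : 4 ∣ ℓ) : Complex.I ^ (j % ℓ) = Complex.I ^ j := by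
  conv_rhs => rw [← Nat.mod_add_div j ℓ, pow_add, pow_mul]
  obtain ⟨k, rfl⟩ := hℓ
  rw [pow_mul, Complex.I_pow_four, one_pow, one_pow, mul_one]

lemma QLP_I_pow_mod4 (j : ℕ) : Complex.I ^ j = Complex.I ^ (j % 4) :=
  (QLP_I_pow_mod 4 j ⟨1, rfl⟩).symm

lemma QLPcv_parity (a : ℂ) (ha : a = 1 ∨ a = -1 ∨ a = Complex.I ∨ a = -Complex.I) (j : ℕ) :
    (((QLPcv (a * Complex.I ^ j)).1 : ZMod 2), ((QLPcv (a * Complex.I ^ j)).2 : ZMod 2)) =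
      if j % 2 = 0 then (((QLPcv a).1 : ZMod 2), ((QLPcv a).2 : ZMod 2))
      else (((QLPcv a).2 : ZMod 2), ((QLPcv a).1 : ZMod 2)) := by
  rw [QLP_I_pow_mod4]
  have h4 : j % 4 = 0 ∨ j % 4 = 1 ∨ j % 4 = 2 ∨ j % 4 = 3 := by omega
  rcases ha with h | h | h | h <;> subst h <;> rcases h4 with h | h | h | h <;> rw [h] <;>
    (first
      | rw [if_pos (show j % 2 = 0 by omega)]
      | rw [if_neg (show ¬ j % 2 = 0 by omega)]) <;>
    norm_num [QLPcv, Complex.ext_iff, pow_succ] <;> decide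

lemma QLP_root_mul {a : ℂ} (ha : a = 1 ∨ a = -1 ∨ a = Complex.I ∨ a = -Complex.I) (j : ℕ) :
    a * Complex.I ^ j = 1 ∨ a * Complex.I ^ j = -1 ∨ a * Complex.I ^ j = Complex.I ∨
      a * Complex.I ^ j = -Complex.I := by
  rw [QLP_I_pow_mod4]
  have h4 : j % 4 = 0 ∨ j % 4 = 1 ∨ j % 4 = 2 ∨ j % 4 = 3 := by omega
  rcases ha with h | h | h | h <;> subst h <;> rcases h4 with h | h | h | h <;> rw [h] <;>
    norm_num [pow_succ, Complex.I_mul_I] <;> tauto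

lemma QLP_odd_cast {n : ℤ} (hn : Odd n) : ((n : ℤ) : ZMod 2) = 1 := by
  obtain ⟨m, rfl⟩ := hn
  push_cast
  rw [show (2 : ZMod 2) = 0 from rfl]
  ring

lemma QLP_odd_count (k : ℕ) :
    ∑ j ∈ range (4 * k), (if j % 2 = 0 then (0 : ZMod 2) else 1) = 0 := by
  induction k with
  | zero => simp
  | succ n ih =>
    rw [show 4 * (n + 1) = 4 * n + 1 + 1 + 1 + 1 by ring, sum_range_succ, sum_range_succ,
      sum_range_succ, sum_range_succ, ih]
    have h0 : (4 * n) % 2 = 0 := by omega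
    have h1 : ¬ (4 * n + 1) % 2 = 0 := by omega
    have h2 : (4 * n + 1 + 1) % 2 = 0 := by omega
    have h3 : ¬ (4 * n + 1 + 1 + 1) % 2 = 0 := by omega
    rw [if_pos h0, if_neg h1, if_pos h2, if_neg h3]
    decide

lemma QLP_even_sum (ℓ k : ℕ) (hk : ℓ = 4 * k) (c d e : ℕ → ℤ)
    (hpar : ∀ j < ℓ, ((e j : ZMod 2)) = if j % 2 = 0 then (c j : ZMod 2) else (d j : ZMod 2))
    (hodd : ∀ j < ℓ, Odd (c j + d j))
    (hc : ∑ j ∈ range ℓ, c j = 0) :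
    ((∑ j ∈ range ℓ, e j : ℤ) : ZMod 2) = 0 := by
  push_cast
  have : ∀ j ∈ range ℓ, ((e j : ZMod 2)) = (c j : ZMod 2) + (if j % 2 = 0 then (0 : ZMod 2) else 1) := by
    intro j hj
    rw [hpar j (mem_range.1 hj)]
    by_cases hj2 : j % 2 = 0
    · rw [if_pos hj2, if_pos hj2, add_zero]
    · rw [if_neg hj2, if_neg hj2]
      have ho := QLP_odd_cast (hodd j (mem_range.1 hj))
      push_cast at ho ⊢
      have h2 : (2 : ZMod 2) = 0 := rfl
      linear_combination ho - ((c j : ℤ) : ZMod 2) * h2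
  rw [Finset.sum_congr rfl this, Finset.sum_add_distrib]
  have h1 : ∑ j ∈ range ℓ, ((c j : ZMod 2)) = ((∑ j ∈ range ℓ, c j : ℤ) : ZMod 2) := by push_cast; rfl
  rw [h1, hc, hk, QLP_odd_count]
  simp

open ComplexConjugate in
lemma QLP_coords_zero {x y : ℤ} (h : (x : ℂ) + (y : ℂ) * Complex.I = 0) : x = 0 ∧ y = 0 := by
  have h1 := congrArg Complex.re h
  have h2 := congrArg Complex.im h
  simp at h1 h2
  exact ⟨by exact_mod_cast h1, by exact_mod_cast h2⟩

lemma QLP_sum_repr (ℓ : ℕ) (f : ℕ → ℂ)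
    (hf : ∀ j < ℓ, f j = 1 ∨ f j = -1 ∨ f j = Complex.I ∨ f j = -Complex.I) :
    ∑ j ∈ Finset.range ℓ, f j = ((∑ j ∈ Finset.range ℓ, (QLPcv (f j)).1 : ℤ) : ℂ) +
      ((∑ j ∈ Finset.range ℓ, (QLPcv (f j)).2 : ℤ) : ℂ) * Complex.I := by
  push_cast
  rw [Finset.sum_mul, ← Finset.sum_add_distrib]
  exact Finset.sum_congr rfl fun j hj => QLPcv_spec (hf j (Finset.mem_range.1 hj))

lemma QLP_exp_I : Complex.exp ((Real.pi / 2 : ℝ) * Complex.I) = Complex.I := by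
  rw [Complex.exp_mul_I, ← Complex.ofReal_cos, ← Complex.ofReal_sin,
    Real.cos_pi_div_two, Real.sin_pi_div_two]
  simp

lemma QLP_dft_quarter (ℓ k : ℕ) (hk : ℓ = 4 * k) (hpos : 0 < k) (A : ℕ → ℂ) :
    DFT ℓ A (ℓ / 4) = ∑ j ∈ range ℓ, A j * Complex.I ^ j := by
  unfold DFT
  refine Finset.sum_congr rfl fun j hj => ?_
  congr 1
  have h4 : ℓ / 4 = k := by omega
  rw [h4]
  have hkC : (k : ℂ) ≠ 0 := Nat.cast_ne_zero.2 (by omega)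
  have harg : 2 * (Real.pi : ℂ) * Complex.I * j * k / (ℓ : ℂ) =
      (j : ℕ) * ((Real.pi / 2 : ℝ) * Complex.I) := by
    rw [hk]
    push_cast
    field_simp
    ring
  rw [harg, Complex.exp_nat_mul, QLP_exp_I]

open ComplexConjugate

lemma QLP_shift_mod (ℓ k a : ℕ) (hℓ : 0 < ℓ) (ha : a < ℓ) :
    (k + (a + (ℓ - k % ℓ)) % ℓ) % ℓ = a := by
  have hd := Nat.mod_add_div k ℓ
  have hm : k % ℓ < ℓ := Nat.mod_lt _ hℓ
  rw [Nat.add_mod_mod, show k + (a + (ℓ - k % ℓ)) = a + ℓ * (k / ℓ) + ℓ by omega,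
    Nat.add_mod_right, Nat.add_mul_mod_self_left, Nat.mod_eq_of_lt ha]

lemma QLP_shift_mod' (ℓ k a : ℕ) (hℓ : 0 < ℓ) (ha : a < ℓ) :
    ((k + a) % ℓ + (ℓ - k % ℓ)) % ℓ = a := by
  have hd := Nat.mod_add_div k ℓ
  have hm : k % ℓ < ℓ := Nat.mod_lt _ hℓ
  rw [Nat.mod_add_mod, show k + a + (ℓ - k % ℓ) = a + ℓ * (k / ℓ) + ℓ by omega,
    Nat.add_mod_right, Nat.add_mul_mod_self_left, Nat.mod_eq_of_lt ha]

lemma QLP_sum_shift (ℓ : ℕ) (hℓ : 0 < ℓ) (k : ℕ) (g : ℕ → ℂ) :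
    ∑ j ∈ range ℓ, g j = ∑ t ∈ range ℓ, g ((k + t) % ℓ) := by
  refine (Finset.sum_nbij' (fun t => (k + t) % ℓ) (fun j => (j + (ℓ - k % ℓ)) % ℓ)
    ?_ ?_ ?_ ?_ ?_).symm
  · intro a ha; exact mem_range.2 (Nat.mod_lt _ hℓ)
  · intro a ha; exact mem_range.2 (Nat.mod_lt _ hℓ)
  · intro a ha; exact QLP_shift_mod' ℓ k a hℓ (mem_range.1 ha)
  · intro a ha; exact QLP_shift_mod ℓ k a hℓ (mem_range.1 ha)
  · intro a ha; rfl

lemma QLP_mod_cancel (ℓ t j : ℕ) (hℓ : 0 < ℓ) (ht : t ≤ ℓ) (hj : j < ℓ) :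
    ((j + t) % ℓ + (ℓ - t)) % ℓ = j := by
  rw [Nat.mod_add_mod, show j + t + (ℓ - t) = j + ℓ by omega, Nat.add_mod_right,
    Nat.mod_eq_of_lt hj]

/-- conjugation symmetry of PAF -/
lemma QLP_paf_conj (ℓ : ℕ) (hℓ : 0 < ℓ) (A : ℕ → ℂ) (t : ℕ) (ht : t ≤ ℓ) :
    conj (PAF ℓ A t) = PAF ℓ A (ℓ - t) := by
  unfold PAF
  rw [map_sum]
  refine Finset.sum_nbij' (fun j => (j + t) % ℓ) (fun m => (m + (ℓ - t)) % ℓ)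
    ?_ ?_ ?_ ?_ ?_
  · intro a ha; exact mem_range.2 (Nat.mod_lt _ hℓ)
  · intro a ha; exact mem_range.2 (Nat.mod_lt _ hℓ)
  · intro a ha; exact QLP_mod_cancel ℓ t a hℓ ht (mem_range.1 ha)
  · intro a ha
    have h1 : ℓ - (ℓ - t) = t := by omega
    have := QLP_mod_cancel ℓ (ℓ - t) a hℓ (by omega) (mem_range.1 ha)
    rwa [h1] at this
  · intro a ha
    rw [map_mul, Complex.conj_conj, QLP_mod_cancel ℓ t a hℓ ht (mem_range.1 ha)]
    ring

lemma QLP_paf_zero (ℓ : ℕ) (A : ℕ → ℂ) (hA : IsQuaternary ℓ A) : PAF ℓ A 0 = (ℓ : ℂ) := by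
  unfold PAF
  rw [show ((ℓ : ℂ)) = ∑ _j ∈ range ℓ, (1 : ℂ) by simp]
  refine Finset.sum_congr rfl fun j hj => ?_
  rw [Nat.add_zero, Nat.mod_eq_of_lt (mem_range.1 hj), Complex.mul_conj]
  rcases hA j (mem_range.1 hj) with h | h | h | h <;> rw [h] <;> simp

/-- The key identity: PSD at ℓ/4 as a PAF sum. -/
lemma QLP_psd_eq (ℓ k : ℕ) (hk : ℓ = 4 * k) (hpos : 0 < k) (A : ℕ → ℂ) :
    ((PSD ℓ A (ℓ / 4) : ℝ) : ℂ) = ∑ t ∈ range ℓ, Complex.I ^ t * conj (PAF ℓ A t) := by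
  have hℓ : 0 < ℓ := by omega
  have h1 : ((PSD ℓ A (ℓ / 4) : ℝ) : ℂ) =
      (∑ j ∈ range ℓ, A j * Complex.I ^ j) * conj (∑ j ∈ range ℓ, A j * Complex.I ^ j) := by
    unfold PSD
    rw [QLP_dft_quarter ℓ k hk hpos]
    push_cast [Complex.sq_norm]
    exact (Complex.mul_conj _).symm
  rw [h1, map_sum, Finset.sum_mul_sum, Finset.sum_comm]
  have h2 : ∀ kk ∈ range ℓ,
      (∑ j ∈ range ℓ, A j * Complex.I ^ j * conj (A kk * Complex.I ^ kk)) =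
      ∑ t ∈ range ℓ, A ((kk + t) % ℓ) * Complex.I ^ ((kk + t) % ℓ) * conj (A kk * Complex.I ^ kk) :=
    fun kk _ => QLP_sum_shift ℓ hℓ kk _
  rw [Finset.sum_congr rfl h2, Finset.sum_comm]
  refine Finset.sum_congr rfl fun t ht => ?_
  rw [PAF, map_sum, Finset.mul_sum]
  refine Finset.sum_congr rfl fun m hm => ?_
  have hIp : Complex.I ^ ((m + t) % ℓ) * conj (Complex.I ^ m) = Complex.I ^ t := by
    rw [QLP_I_pow_mod ℓ (m + t) ⟨k, hk⟩, pow_add, map_pow, Complex.conj_I]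
    calc Complex.I ^ m * Complex.I ^ t * (-Complex.I) ^ m
        = (Complex.I * -Complex.I) ^ m * Complex.I ^ t := by rw [mul_pow]; ring
      _ = Complex.I ^ t := by
          rw [show Complex.I * -Complex.I = 1 by rw [mul_neg, Complex.I_mul_I, neg_neg], one_pow,
            one_mul]
  calc A ((m + t) % ℓ) * Complex.I ^ ((m + t) % ℓ) * conj (A m * Complex.I ^ m)
      = (Complex.I ^ ((m + t) % ℓ) * conj (Complex.I ^ m)) * (A ((m + t) % ℓ) * conj (A m)) := by
        rw [map_mul]; ring
    _ = Complex.I ^ t * (A ((m + t) % ℓ) * conj (A m)) := by rw [hIp]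
    _ = Complex.I ^ t * conj (A m * conj (A ((m + t) % ℓ))) := by
        rw [map_mul, Complex.conj_conj]; ring

lemma QLP_geom (ℓ : ℕ) (h4 : 4 ∣ ℓ) : ∑ t ∈ range ℓ, Complex.I ^ t = 0 := by
  obtain ⟨k, rfl⟩ := h4
  rw [geom_sum_eq (by simp [Complex.ext_iff] : Complex.I ≠ (1:ℂ))]
  rw [pow_mul, Complex.I_pow_four, one_pow, sub_self, zero_div]

lemma QLP_psd_sum (ℓ k : ℕ) (hk : ℓ = 4 * k) (hpos : 0 < k) (A B : ℕ → ℂ)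
    (h : IsLegendrePair ℓ A B) :
    PSD ℓ A (ℓ / 4) + PSD ℓ B (ℓ / 4) = 2 * ℓ + 2 := by
  obtain ⟨hA, hB, hPAF⟩ := h
  have hℓ : 0 < ℓ := by omega
  have hC : ∀ t, 1 ≤ t → t ≤ ℓ - 1 → PAF ℓ A t + PAF ℓ B t = -2 := by
    intro t h1 h2
    by_cases hle : t ≤ ℓ / 2
    · exact hPAF t h1 hle
    · have h1' : 1 ≤ ℓ - t := by omega
      have h2' : ℓ - t ≤ ℓ / 2 := by omega
      have hsA := QLP_paf_conj ℓ hℓ A (ℓ - t) (by omega)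
      have hsB := QLP_paf_conj ℓ hℓ B (ℓ - t) (by omega)
      rw [show ℓ - (ℓ - t) = t by omega] at hsA hsB
      rw [← hsA, ← hsB, ← map_add, hPAF (ℓ - t) h1' h2',
        show ((-2 : ℂ)) = ((-2 : ℝ) : ℂ) by norm_num, Complex.conj_ofReal]
  have key : ((PSD ℓ A (ℓ / 4) + PSD ℓ B (ℓ / 4) : ℝ) : ℂ) = 2 * ℓ + 2 := by
    push_cast
    rw [QLP_psd_eq ℓ k hk hpos A, QLP_psd_eq ℓ k hk hpos B, ← Finset.sum_add_distrib]
    have hterm : ∀ t ∈ range ℓ,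
        Complex.I ^ t * conj (PAF ℓ A t) + Complex.I ^ t * conj (PAF ℓ B t) =
        Complex.I ^ t * conj (PAF ℓ A t + PAF ℓ B t) := by
      intro t ht; rw [map_add]; ring
    rw [Finset.sum_congr rfl hterm]
    have hsplit : ℓ = (ℓ - 1) + 1 := by omega
    have hsplit' : range ℓ = range ((ℓ - 1) + 1) := by rw [← hsplit]
    rw [hsplit', Finset.sum_range_succ']
    have hmain : ∀ i ∈ range (ℓ - 1),
        Complex.I ^ (i + 1) * conj (PAF ℓ A (i + 1) + PAF ℓ B (i + 1)) =
        (-2) * Complex.I ^ (i + 1) := by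
      intro i hi
      have hi' := mem_range.1 hi
      rw [hC (i + 1) (by omega) (by omega)]
      rw [show ((-2 : ℂ)) = ((-2 : ℝ) : ℂ) by norm_num, Complex.conj_ofReal]
      push_cast
      ring
    rw [Finset.sum_congr rfl hmain, ← Finset.mul_sum]
    have hgeom : ∑ i ∈ range (ℓ - 1), Complex.I ^ (i + 1) = -1 := by
      have := QLP_geom ℓ ⟨k, hk⟩
      rw [hsplit, Finset.sum_range_succ'] at this
      simp only [pow_zero] at this
      linear_combination this
    rw [hgeom, pow_zero, one_mul, QLP_paf_zero ℓ A hA, QLP_paf_zero ℓ B hB]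
    rw [show ((ℓ : ℂ) + (ℓ : ℂ)) = (((2 * ℓ : ℕ) : ℝ) : ℂ) by push_cast; ring, Complex.conj_ofReal]
    push_cast
    ring
  exact_mod_cast key

theorem PSD_quarter_mod_eight (ℓ : ℕ) (hℓ : 4 ∣ ℓ) (A B : ℕ → ℂ)
    (h : IsLegendrePair ℓ A B)
    (hsumA : ∑ j ∈ Finset.range ℓ, A j = 0)
    (hsumB : ∑ j ∈ Finset.range ℓ, B j = 1 + Complex.I) :
    ∃ m : ℤ, PSD ℓ A (ℓ / 4) = ((8 * m : ℤ) : ℝ) := by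
  obtain ⟨k, hk⟩ := hℓ
  have hkpos : 0 < k := by
    rcases Nat.eq_zero_or_pos k with h0 | h0
    · rw [hk, h0] at hsumB
      simp [Complex.ext_iff] at hsumB
    · exact h0
  obtain ⟨hA, hB, hPAF⟩ := h
  -- integer coordinate sums of A itself
  have hreprA := QLP_sum_repr ℓ A hA
  rw [hsumA] at hreprA
  obtain ⟨hc1, hc2⟩ := QLP_coords_zero hreprA.symm
  -- integer coordinates of the quarter DFTs
  set X : ℤ := ∑ j ∈ Finset.range ℓ, (QLPcv (A j * Complex.I ^ j)).1 with hXdef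
  set Y : ℤ := ∑ j ∈ Finset.range ℓ, (QLPcv (A j * Complex.I ^ j)).2 with hYdef
  set U : ℤ := ∑ j ∈ Finset.range ℓ, (QLPcv (B j * Complex.I ^ j)).1 with hUdef
  set V : ℤ := ∑ j ∈ Finset.range ℓ, (QLPcv (B j * Complex.I ^ j)).2 with hVdef
  have hTA := QLP_sum_repr ℓ (fun j => A j * Complex.I ^ j)
    (fun j hj => QLP_root_mul (hA j hj) j)
  have hTB := QLP_sum_repr ℓ (fun j => B j * Complex.I ^ j)
    (fun j hj => QLP_root_mul (hB j hj) j)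
  have hPSDA : PSD ℓ A (ℓ / 4) = (X : ℝ) ^ 2 + (Y : ℝ) ^ 2 := by
    unfold PSD
    rw [QLP_dft_quarter ℓ k hk hkpos, hTA,
      show ((X : ℂ) + (Y : ℂ) * Complex.I = ((X : ℝ) : ℂ) + ((Y : ℝ) : ℂ) * Complex.I) by
        push_cast; ring,
      Complex.sq_norm, Complex.normSq_add_mul_I]
  have hPSDB : PSD ℓ B (ℓ / 4) = (U : ℝ) ^ 2 + (V : ℝ) ^ 2 := by
    unfold PSD
    rw [QLP_dft_quarter ℓ k hk hkpos, hTB,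
      show ((U : ℂ) + (V : ℂ) * Complex.I = ((U : ℝ) : ℂ) + ((V : ℝ) : ℂ) * Complex.I) by
        push_cast; ring,
      Complex.sq_norm, Complex.normSq_add_mul_I]
  -- parity of X and Y
  have hXe : (X : ZMod 2) = 0 := by
    rw [hXdef]
    refine QLP_even_sum ℓ k hk (fun j => (QLPcv (A j)).1) (fun j => (QLPcv (A j)).2)
      (fun j => (QLPcv (A j * Complex.I ^ j)).1) ?_ (fun j _ => QLPcv_odd (A j)) hc1
    intro j hj
    have hp := QLPcv_parity (A j) (hA j hj) j
    by_cases h2 : j % 2 = 0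
    · rw [if_pos h2] at hp ⊢; exact (Prod.ext_iff.1 hp).1
    · rw [if_neg h2] at hp ⊢; exact (Prod.ext_iff.1 hp).1
  have hYe : (Y : ZMod 2) = 0 := by
    rw [hYdef]
    refine QLP_even_sum ℓ k hk (fun j => (QLPcv (A j)).2) (fun j => (QLPcv (A j)).1)
      (fun j => (QLPcv (A j * Complex.I ^ j)).2) ?_
      (fun j _ => by rw [add_comm]; exact QLPcv_odd (A j)) hc2
    intro j hj
    have hp := QLPcv_parity (A j) (hA j hj) j
    by_cases h2 : j % 2 = 0
    · rw [if_pos h2] at hp ⊢; exact (Prod.ext_iff.1 hp).2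
    · rw [if_neg h2] at hp ⊢; exact (Prod.ext_iff.1 hp).2
  obtain ⟨x', hx'⟩ := (ZMod.intCast_zmod_eq_zero_iff_dvd X 2).1 hXe
  obtain ⟨y', hy'⟩ := (ZMod.intCast_zmod_eq_zero_iff_dvd Y 2).1 hYe
  -- the Parseval-type identity
  have hsum := QLP_psd_sum ℓ k hk hkpos A B ⟨hA, hB, hPAF⟩
  rw [hPSDA, hPSDB] at hsum
  have hint : X ^ 2 + Y ^ 2 + (U ^ 2 + V ^ 2) = 2 * (ℓ : ℤ) + 2 := by exact_mod_cast hsum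
  have hl : (ℓ : ℤ) = 4 * (k : ℤ) := by rw [hk]; push_cast; ring
  rcases Int.even_or_odd (x' ^ 2 + y' ^ 2) with ⟨m, hm⟩ | ⟨m, hm⟩
  · refine ⟨m, ?_⟩
    rw [hPSDA]
    have hXY : X ^ 2 + Y ^ 2 = 8 * m := by rw [hx', hy']; linear_combination 4 * hm
    exact_mod_cast congrArg (fun z : ℤ => (z : ℝ)) hXY
  · exfalso
    have hXY : X ^ 2 + Y ^ 2 = 8 * m + 4 := by rw [hx', hy']; linear_combination 4 * hm
    have hUV : U ^ 2 + V ^ 2 = 8 * (k : ℤ) - 8 * m - 2 := by linarith [hint, hXY]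
    have h8 : ((U : ZMod 8)) ^ 2 + (V : ZMod 8) ^ 2 = 6 := by
      have hc := congrArg (fun z : ℤ => (z : ZMod 8)) hUV
      push_cast at hc
      rw [hc, show ((8 : ZMod 8)) = 0 from rfl]
      ring_nf
      decide
    exact (by decide : ∀ u v : ZMod 8, u ^ 2 + v ^ 2 ≠ 6) _ _ h8
end

section
/- Let q > 2 be a prime. If m = |α|² is a (rational) integer for some α ∈ ℚ(ξ_q), then every rational prime p dividing the square-free part of m satisfies p = q or the multiplicative order of p modulo q is odd. -/
open Polynomial

-- L1: cyclotomic divides its composition with X^(q-1)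
lemma cyclo_comp_dvd (q : ℕ) (hq : q.Prime) (hq2 : 2 < q) :
    cyclotomic q ℤ ∣ (cyclotomic q ℤ).comp (X ^ (q - 1)) := by
  have hq0 : (0:ℕ) < q := hq.pos
  set ξ : ℂ := Complex.exp (2 * Real.pi * Complex.I / q) with hξdef
  have hξ : IsPrimitiveRoot ξ q := Complex.isPrimitiveRoot_exp q hq.ne_zero
  have hcop : (q - 1).Coprime q := by
    refine Nat.Coprime.symm (hq.coprime_iff_not_dvd.mpr ?_)
    intro h
    have h2 := Nat.le_of_dvd (show 0 < q - 1 by omega) h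
    omega
  have hξ' : IsPrimitiveRoot (ξ ^ (q - 1)) q := hξ.pow_of_coprime (q - 1) hcop
  have h2 : (aeval ξ) ((cyclotomic q ℚ).comp (X ^ (q - 1))) = 0 := by
    rw [aeval_comp, map_pow, aeval_X]
    have := hξ'.isRoot_cyclotomic hq0 (R := ℂ)
    rw [aeval_def, ← eval_map, map_cyclotomic]
    · exact this
  have hdvdQ : cyclotomic q ℚ ∣ (cyclotomic q ℚ).comp (X ^ (q - 1)) := by
    rw [cyclotomic_eq_minpoly_rat hξ hq0]
    exact minpoly.dvd ℚ ξ (by rwa [cyclotomic_eq_minpoly_rat hξ hq0] at h2)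
  rw [← map_dvd_map (Int.castRingHom ℚ) Int.cast_injective (cyclotomic.monic q ℤ)]
  rwa [map_cyclotomic, Polynomial.map_comp, map_cyclotomic, Polynomial.map_pow, map_X]

-- L2: mod-p step: if p | N then Φ̄ divides ḡ
lemma modp_bar_dvd (q p : ℕ) (hq : q.Prime) (hp : p.Prime) (hne : p ≠ q) (hq2 : 2 < q)
    (k : ℕ) (hk : ((p : ℤ) ^ k + 1 : ℤ) % q = 0) (g : ℤ[X]) (N : ℤ)
    (hdvd : cyclotomic q ℤ ∣ g * g.comp (X ^ (q - 1)) - C N) (hpN : (p:ℤ) ∣ N) :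
    cyclotomic q (ZMod p) ∣ g.map (Int.castRingHom (ZMod p)) := by
  haveI : Fact p.Prime := ⟨hp⟩
  set gb : (ZMod p)[X] := g.map (Int.castRingHom (ZMod p)) with hgb
  -- divisibility mod p
  have hc : cyclotomic q (ZMod p) ∣ gb * gb.comp (X ^ (q - 1)) := by
    have h1 := Polynomial.map_dvd (Int.castRingHom (ZMod p)) hdvd
    rw [map_cyclotomic] at h1
    rw [Polynomial.map_sub, Polynomial.map_mul, Polynomial.map_comp, Polynomial.map_pow,
      map_X, map_C] at h1
    have hN0 : ((Int.castRingHom (ZMod p)) N) = 0 := by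
      exact (ZMod.intCast_zmod_eq_zero_iff_dvd N p).mpr hpN
    rw [hN0, map_zero, sub_zero] at h1
    exact h1
  -- setup quotient ring
  have hΦmonic : (cyclotomic q (ZMod p)).Monic := cyclotomic.monic q (ZMod p)
  have hdeg : (cyclotomic q (ZMod p)).degree ≠ 0 := by
    rw [degree_cyclotomic q (ZMod p)]
    have ht : q.totient = q - 1 := Nat.totient_prime hq
    rw [ht]
    simp only [ne_eq, Nat.cast_eq_zero]
    intro hcontra
    exact absurd (Nat.cast_injective hcontra) (by omega)
  haveI := AdjoinRoot.nontrivial (cyclotomic q (ZMod p)) hdeg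
  set A := AdjoinRoot (cyclotomic q (ZMod p)) with hA
  set t : A := AdjoinRoot.root (cyclotomic q (ZMod p)) with ht
  haveI : CharP A p := charP_of_injective_algebraMap' (ZMod p) (A := A) p
  -- t ^ q = 1
  have htq : t ^ q = 1 := by
    have hdq : cyclotomic q (ZMod p) ∣ (X ^ q - 1 : (ZMod p)[X]) :=
      cyclotomic.dvd_X_pow_sub_one q (ZMod p)
    have h0 := AdjoinRoot.mk_eq_zero.mpr hdq
    rw [map_sub, map_pow, map_one, AdjoinRoot.mk_X, sub_eq_zero] at h0
    exact h0
  -- q divides p ^ k + 1 in ℕ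
  have hqdvd : q ∣ p ^ k + 1 := by
    have : (q:ℤ) ∣ ((p:ℤ) ^ k + 1) := Int.dvd_of_emod_eq_zero hk
    have h2 : (q:ℤ) ∣ ((p ^ k + 1 : ℕ) : ℤ) := by push_cast; exact this
    exact_mod_cast Int.ofNat_dvd.mp h2
  obtain ⟨c, hc'⟩ := hqdvd
  have hc1 : 1 ≤ c := by nlinarith [Nat.one_le_two_pow (n := k), pow_pos hp.pos k, hq.pos]
  have hpk : p ^ k = q * (c - 1) + (q - 1) := by
    have h5 : q * (c - 1) + q = q * c := by
      have h6 : c - 1 + 1 = c := by omega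
      rw [← Nat.mul_succ, Nat.succ_eq_add_one, h6]
    have := hq.pos; omega
  have hts : t ^ (p ^ k) = t ^ (q - 1) := by
    rw [hpk, pow_add, pow_mul, htq, one_pow, one_mul]
  -- Frobenius
  have key : (AdjoinRoot.mk (cyclotomic q (ZMod p)) gb) ^ (p ^ k)
      = AdjoinRoot.mk (cyclotomic q (ZMod p)) (gb.comp (X ^ (q - 1))) := by
    have h1 : (AdjoinRoot.mk (cyclotomic q (ZMod p))) gb
        = eval₂ (algebraMap (ZMod p) A) t gb := by
      rw [← AdjoinRoot.aeval_eq, aeval_def]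
    have hφ := iterateFrobenius A p k
    have h2 : ((AdjoinRoot.mk (cyclotomic q (ZMod p))) gb) ^ (p ^ k)
        = eval₂ ((iterateFrobenius A p k).comp (algebraMap (ZMod p) A))
            (iterateFrobenius A p k t) gb := by
      rw [h1, ← hom_eval₂, iterateFrobenius_def]
    have h3 : (iterateFrobenius A p k).comp (algebraMap (ZMod p) A)
        = algebraMap (ZMod p) A := by
      ext x
      rw [RingHom.comp_apply, iterateFrobenius_def, ← map_pow, ZMod.pow_card_pow]
    have h4 : iterateFrobenius A p k t = t ^ (q - 1) := by
      rw [iterateFrobenius_def, hts]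
    rw [h2, h3, h4, ← aeval_def, ← AdjoinRoot.aeval_eq, aeval_comp]
    simp
    rfl
  -- conclude
  have hzero : (AdjoinRoot.mk (cyclotomic q (ZMod p))) (gb ^ (p ^ k + 1)) = 0 := by
    rw [map_pow, pow_succ, key, ← map_mul, mul_comm, AdjoinRoot.mk_eq_zero.mpr hc]
  have hdvdpow : cyclotomic q (ZMod p) ∣ gb ^ (p ^ k + 1) :=
    AdjoinRoot.mk_eq_zero.mp hzero
  -- squarefree
  have hqp : ((q : ZMod p)) ≠ 0 := by
    rw [Ne, ZMod.natCast_eq_zero_iff]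
    intro hcontra
    exact hne ((Nat.prime_dvd_prime_iff_eq hp hq).mp hcontra)
  have hsep : (X ^ q - 1 : (ZMod p)[X]).Separable := by
    have h6 : (X ^ q - 1 : (ZMod p)[X]) = X ^ q - C 1 := by rw [map_one]
    rw [h6]
    exact separable_X_pow_sub_C 1 hqp one_ne_zero
  have hsq : Squarefree (cyclotomic q (ZMod p)) :=
    hsep.squarefree.squarefree_of_dvd (cyclotomic.dvd_X_pow_sub_one q (ZMod p))
  exact (hsq.dvd_pow_iff_dvd (Nat.succ_ne_zero _)).mp hdvdpow

-- L3: full descent step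
lemma modp_step (q p : ℕ) (hq : q.Prime) (hp : p.Prime) (hne : p ≠ q) (hq2 : 2 < q)
    (k : ℕ) (hk : ((p : ℤ) ^ k + 1 : ℤ) % q = 0) (g : ℤ[X]) (N : ℤ)
    (hdvd : cyclotomic q ℤ ∣ g * g.comp (X ^ (q - 1)) - C N) (hpN : (p:ℤ) ∣ N) :
    ∃ w : ℤ[X], ∃ M : ℤ, N = (p:ℤ)^2 * M ∧
      cyclotomic q ℤ ∣ w * w.comp (X ^ (q - 1)) - C M := by
  haveI : Fact p.Prime := ⟨hp⟩
  have hbar := modp_bar_dvd q p hq hp hne hq2 k hk g N hdvd hpN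
  have hmonic : (cyclotomic q ℤ).Monic := cyclotomic.monic q ℤ
  set Φ : ℤ[X] := cyclotomic q ℤ with hΦdef
  set r : ℤ[X] := g %ₘ Φ with hrdef
  set u : ℤ[X] := g /ₘ Φ with hudef
  have hdecomp : r + Φ * u = g := modByMonic_add_div g Φ
  -- the reduction of r mod p is zero
  have hrbar : r.map (Int.castRingHom (ZMod p)) = 0 := by
    have h1 : cyclotomic q (ZMod p) ∣ r.map (Int.castRingHom (ZMod p)) := by
      have h2 : r.map (Int.castRingHom (ZMod p))
          = g.map (Int.castRingHom (ZMod p))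
            - cyclotomic q (ZMod p) * u.map (Int.castRingHom (ZMod p)) := by
        rw [← map_cyclotomic q (Int.castRingHom (ZMod p)), ← Polynomial.map_mul, eq_sub_iff_add_eq,
          ← Polynomial.map_add, hdecomp]
      rw [h2]
      exact dvd_sub hbar (dvd_mul_right _ _)
    by_contra h0
    have hlt : (r.map (Int.castRingHom (ZMod p))).degree < (cyclotomic q (ZMod p)).degree := by
      calc (r.map (Int.castRingHom (ZMod p))).degree ≤ r.degree := degree_map_le
        _ < Φ.degree := degree_modByMonic_lt g hmonic
        _ = (cyclotomic q (ZMod p)).degree := by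
            rw [hΦdef, degree_cyclotomic, degree_cyclotomic]
    exact h0 (Polynomial.eq_zero_of_dvd_of_degree_lt h1 hlt)
  -- r = C p * w
  have hCp : C (p:ℤ) ∣ r := by
    rw [C_dvd_iff_dvd_coeff]
    intro i
    have h3 := congrArg (fun f => Polynomial.coeff f i) hrbar
    simp only [coeff_map, coeff_zero] at h3
    exact_mod_cast (ZMod.intCast_zmod_eq_zero_iff_dvd _ p).mp h3
  obtain ⟨w, hw⟩ := hCp
  have hgs : g = Φ * u + C (p:ℤ) * w := by rw [← hw, ← hdecomp]; ring
  have hΦcomp : Φ ∣ Φ.comp (X ^ (q - 1)) := cyclo_comp_dvd q hq hq2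
  -- Φ divides C p ^ 2 * (w ŵ) - C N
  have hs : Φ ∣ C (p:ℤ) ^ 2 * (w * w.comp (X ^ (q - 1))) - C N := by
    have h2 : C (p:ℤ) ^ 2 * (w * w.comp (X ^ (q - 1))) - C N
        = (g * g.comp (X ^ (q - 1)) - C N)
          - (Φ * u) * g.comp (X ^ (q - 1))
          - (C (p:ℤ) * w) * (Φ.comp (X ^ (q - 1)) * u.comp (X ^ (q - 1))) := by
      rw [hgs]
      simp only [add_comp, mul_comp, C_comp]
      ring
    rw [h2]
    exact dvd_sub (dvd_sub hdvd (dvd_mul_of_dvd_left (dvd_mul_right Φ u) _))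
      (Dvd.dvd.mul_left (dvd_mul_of_dvd_left hΦcomp _) _)
  obtain ⟨h, hh⟩ := hs
  -- p^2 divides N and h
  have hp2 : 1 < p ^ 2 := by nlinarith [hp.two_le]
  haveI : Fact (1 < p ^ 2) := ⟨hp2⟩
  have hmapped : - C ((N : ZMod (p^2)))
      = cyclotomic q (ZMod (p^2)) * h.map (Int.castRingHom (ZMod (p^2))) := by
    have h4 := congrArg (Polynomial.map (Int.castRingHom (ZMod (p^2)))) hh
    rw [Polynomial.map_sub, Polynomial.map_mul, Polynomial.map_pow, map_C, map_C,
      Polynomial.map_mul, hΦdef, Polynomial.map_mul, map_cyclotomic] at h4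
    have h5 : (C ((Int.castRingHom (ZMod (p^2))) (p:ℤ))) ^ 2 = 0 := by
      rw [← C_pow]
      have h6 : ((Int.castRingHom (ZMod (p^2))) (p:ℤ)) ^ 2 = 0 := by
        have : ((Int.castRingHom (ZMod (p^2))) (p:ℤ)) = ((p:ℕ) : ZMod (p^2)) := by
          simp
        rw [this, ← Nat.cast_pow, ZMod.natCast_self]
      rw [h6, map_zero]
    rw [h5, zero_mul, zero_sub] at h4
    exact h4
  have hhbar : h.map (Int.castRingHom (ZMod (p^2))) = 0 := by
    by_contra h0
    have hmon2 : (cyclotomic q (ZMod (p^2))).Monic := cyclotomic.monic q _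
    have hdeg2 := hmon2.natDegree_mul' h0
    have hdegC : (- C ((N : ZMod (p^2)))).natDegree = 0 := by
      rw [natDegree_neg]; exact natDegree_C _
    rw [hmapped, hdeg2] at hdegC
    have htot : (cyclotomic q (ZMod (p^2))).natDegree = q.totient := natDegree_cyclotomic _ _
    rw [htot] at hdegC
    have := Nat.totient_pos.mpr hq.pos
    omega
  -- extract factors of p^2
  have hN2 : ((p:ℤ)^2) ∣ N := by
    have h6 : ((N : ZMod (p^2))) = 0 := by
      by_contra h0
      apply h0
      have h7 := congrArg (fun f => Polynomial.coeff f 0) hmapped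
      simp only [hhbar, mul_zero, coeff_zero, coeff_neg, coeff_C_zero] at h7
      exact neg_eq_zero.mp h7
    have := (ZMod.intCast_zmod_eq_zero_iff_dvd N (p^2)).mp h6
    exact_mod_cast this
  have hh2 : C (p:ℤ) ^ 2 ∣ h := by
    rw [← C_pow, C_dvd_iff_dvd_coeff]
    intro i
    have h3 := congrArg (fun f => Polynomial.coeff f i) hhbar
    simp only [coeff_map, coeff_zero] at h3
    have := (ZMod.intCast_zmod_eq_zero_iff_dvd (h.coeff i) (p^2)).mp h3
    exact_mod_cast this
  obtain ⟨M, hM⟩ := hN2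
  obtain ⟨h', hh'⟩ := hh2
  refine ⟨w, M, hM, ⟨h', ?_⟩⟩
  have hC0 : (C (p:ℤ) ^ 2) ≠ 0 := by
    apply pow_ne_zero
    simp only [ne_eq, C_eq_zero]
    exact_mod_cast hp.pos.ne'
  apply mul_left_cancel₀ hC0
  have h8 : C (p:ℤ) ^ 2 * (w * w.comp (X ^ (q - 1)) - C M)
      = C (p:ℤ) ^ 2 * (w * w.comp (X ^ (q - 1))) - C N := by
    rw [hM, map_mul, map_pow]; ring
  rw [h8, hh, hh']
  ring

-- L4: descent
lemma descent (q p : ℕ) (hq : q.Prime) (hp : p.Prime) (hne : p ≠ q) (hq2 : 2 < q)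
    (k : ℕ) (hk : ((p : ℤ) ^ k + 1 : ℤ) % q = 0) :
    ∀ n : ℕ, ∀ N : ℤ, N.natAbs = n → N ≠ 0 → Odd (N.natAbs.factorization p) →
      ∀ g : ℤ[X], cyclotomic q ℤ ∣ g * g.comp (X ^ (q - 1)) - C N → False := by
  intro n
  induction n using Nat.strong_induction_on with
  | _ n ih =>
    intro N hn hN0 hodd g hdvd
    have hNa0 : N.natAbs ≠ 0 := Int.natAbs_ne_zero.mpr hN0
    have hv1 : 1 ≤ N.natAbs.factorization p := by
      rcases hodd with ⟨j, hj⟩; omega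
    have hpdvd : p ∣ N.natAbs := by
      rw [← Nat.Prime.dvd_iff_one_le_factorization hp hNa0] at hv1
      exact hv1
    have hpN : (p:ℤ) ∣ N := Int.natAbs_dvd_natAbs.mp (by simpa using hpdvd)
    obtain ⟨w, M, hM, hdvd'⟩ := modp_step q p hq hp hne hq2 k hk g N hdvd hpN
    have hM0 : M ≠ 0 := by rintro rfl; rw [mul_zero] at hM; exact hN0 hM
    have hfacN : N.natAbs = p ^ 2 * M.natAbs := by
      rw [hM, Int.natAbs_mul]
      simp [Int.natAbs_pow]
    have hoddM : Odd (M.natAbs.factorization p) := by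
      have hfac : N.natAbs.factorization p = 2 + M.natAbs.factorization p := by
        rw [hfacN, Nat.factorization_mul (pow_ne_zero 2 hp.pos.ne') (Int.natAbs_ne_zero.mpr hM0)]
        simp [Nat.Prime.factorization_pow, hp]
      rw [Nat.odd_iff] at hodd ⊢
      omega
    have hlt : M.natAbs < n := by
      rw [← hn, hfacN]
      have h2 : 2 ≤ p ^ 2 := by nlinarith [hp.two_le]
      have hMa : 1 ≤ M.natAbs := Nat.one_le_iff_ne_zero.mpr (Int.natAbs_ne_zero.mpr hM0)
      nlinarith
    exact ih M.natAbs hlt M rfl hM0 hoddM w hdvd'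

theorem norm_cyclotomic_prime_condition (q : ℕ) (hq : q.Prime) (hq2 : 2 < q)
    (P : Polynomial ℚ) (m : ℕ)
    (hm : ‖Polynomial.aeval (Complex.exp (2 * Real.pi * Complex.I / q)) P‖ ^ 2
      = (m : ℝ)) :
    ∀ p : ℕ, p.Prime → ¬ Even (m.factorization p) →
      p = q ∨ Odd (orderOf ((p : ZMod q))) := by
  intro p hp hmp
  by_contra hcon
  push_neg at hcon
  obtain ⟨hpq, hodd⟩ := hcon
  rw [Nat.not_odd_iff_even] at hodd
  haveI : Fact q.Prime := ⟨hq⟩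
  have hm0 : m ≠ 0 := by rintro rfl; simp at hmp
  -- order facts
  have hu0 : (p : ZMod q) ≠ 0 := by
    rw [Ne, ZMod.natCast_eq_zero_iff]
    intro hdvd; exact hpq ((Nat.prime_dvd_prime_iff_eq hq hp).mp hdvd).symm
  have hffin : IsOfFinOrder ((p : ZMod q)) := by
    apply isOfFinOrder_iff_pow_eq_one.mpr
    exact ⟨q - 1, by omega, ZMod.pow_card_sub_one_eq_one hu0⟩
  have hfpos : 0 < orderOf ((p:ZMod q)) := hffin.orderOf_pos
  obtain ⟨k, hk2⟩ := hodd
  have hkpos : 0 < k := by omega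
  have hupow : ((p:ZMod q)) ^ k = -1 := by
    have hsq : (((p:ZMod q)) ^ k) * (((p:ZMod q)) ^ k) = 1 := by
      rw [← pow_add, show k + k = orderOf ((p:ZMod q)) from hk2.symm]
      exact pow_orderOf_eq_one _
    have hne1 : ((p:ZMod q)) ^ k ≠ 1 := by
      intro h1
      have hdvd := orderOf_dvd_of_pow_eq_one h1
      have := Nat.le_of_dvd hkpos hdvd
      omega
    rcases mul_self_eq_one_iff.mp hsq with h | h
    · exact absurd h hne1
    · exact h
  have hk : ((p:ℤ) ^ k + 1) % (q:ℤ) = 0 := by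
    apply Int.emod_eq_zero_of_dvd
    rw [← ZMod.intCast_zmod_eq_zero_iff_dvd]
    push_cast
    rw [hupow]
    ring
  -- the analytic part
  set ξ : ℂ := Complex.exp (2 * Real.pi * Complex.I / q) with hξdef
  have hξ : IsPrimitiveRoot ξ q := Complex.isPrimitiveRoot_exp q hq.ne_zero
  have hξne : ξ ≠ 0 := Complex.exp_ne_zero _
  have hξq : ξ ^ q = 1 := hξ.pow_eq_one
  have habs : ‖ξ‖ = 1 := by
    have hrw : 2 * (Real.pi : ℂ) * Complex.I / (q:ℂ) = ((2 * Real.pi / q : ℝ) : ℂ) * Complex.I := by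
      push_cast
      ring
    rw [hξdef, hrw, Complex.norm_exp_ofReal_mul_I]
  have hconj : (starRingEnd ℂ) ξ = ξ ^ (q - 1) := by
    have h1 : ξ * (starRingEnd ℂ) ξ = 1 := by
      rw [Complex.mul_conj, Complex.normSq_eq_norm_sq, habs]
      norm_num
    have h2 : ξ * ξ ^ (q - 1) = 1 := by
      rw [← pow_succ', show q - 1 + 1 = q by omega, hξq]
    exact mul_left_cancel₀ hξne (h1.trans h2.symm)
  have hαconj : (starRingEnd ℂ) ((aeval ξ) P) = (aeval (ξ ^ (q - 1))) P := by
    rw [aeval_def, aeval_def, hom_eval₂, hconj]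
    congr 1
    exact Subsingleton.elim _ _
  have hrel : (aeval ξ) (P * P.comp (X ^ (q - 1)) - C ((m:ℚ))) = 0 := by
    rw [map_sub, map_mul, aeval_comp, map_pow, aeval_X, aeval_C, ← hαconj, Complex.mul_conj,
      Complex.normSq_eq_norm_sq, hm]
    push_cast
    ring
  have hQdvd : cyclotomic q ℚ ∣ P * P.comp (X ^ (q - 1)) - C ((m:ℚ)) := by
    rw [cyclotomic_eq_minpoly_rat hξ hq.pos]
    exact minpoly.dvd ℚ ξ hrel
  -- integer normalization
  obtain ⟨b, hb⟩ := IsLocalization.integerNormalization_map_to_map (nonZeroDivisors ℤ) P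
  set g : ℤ[X] := IsLocalization.integerNormalization (nonZeroDivisors ℤ) P with hgdef
  set d : ℤ := (b : ℤ) with hddef
  have hd0 : d ≠ 0 := nonZeroDivisors.coe_ne_zero b
  have hb' : g.map (Int.castRingHom ℚ) = C ((d:ℚ)) * P := by
    rw [← Polynomial.smul_eq_C_mul]
    rw [algebraMap_int_eq] at hb
    rw [hb]
    rw [← algebraMap_smul (R := ℤ) ℚ[X] d P]
    simp [Algebra.smul_def]
  set N : ℤ := d ^ 2 * (m:ℤ) with hNdef
  have hdvdZ : cyclotomic q ℤ ∣ g * g.comp (X ^ (q - 1)) - C N := by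
    rw [← map_dvd_map (Int.castRingHom ℚ) Int.cast_injective (cyclotomic.monic q ℤ)]
    rw [map_cyclotomic, Polynomial.map_sub, Polynomial.map_mul, Polynomial.map_comp,
      Polynomial.map_pow, map_X, map_C, hb']
    rw [show ((Int.castRingHom ℚ) N) = ((N:ℚ)) by simp]
    have hCN : (C (((N:ℤ) : ℚ)) : ℚ[X]) = C ((d:ℚ)) ^ 2 * C ((m:ℚ)) := by
      rw [hNdef]
      push_cast
      rw [map_mul, map_pow]
    have hexp : (C ((d:ℚ)) * P) * ((C ((d:ℚ)) * P).comp (X ^ (q - 1)))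
        - C (((N:ℤ) : ℚ))
        = C ((d:ℚ)) ^ 2 * (P * P.comp (X ^ (q - 1)) - C ((m:ℚ))) := by
      rw [mul_comp, C_comp, hCN]
      ring
    rw [hexp]
    exact Dvd.dvd.mul_left hQdvd _
  -- parity
  have hN0 : N ≠ 0 := by
    rw [hNdef]
    exact mul_ne_zero (pow_ne_zero _ hd0) (Int.natCast_ne_zero.mpr hm0)
  have hNa : N.natAbs = d.natAbs ^ 2 * m := by
    rw [hNdef, Int.natAbs_mul, Int.natAbs_pow]
    simp
  have hoddv : Odd (N.natAbs.factorization p) := by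
    have hfac : N.natAbs.factorization p
        = 2 * d.natAbs.factorization p + m.factorization p := by
      rw [hNa, Nat.factorization_mul (pow_ne_zero _ (Int.natAbs_ne_zero.mpr hd0)) hm0,
        Nat.factorization_pow]
      simp [mul_comm]
    rw [Nat.odd_iff] at *
    rw [Nat.not_even_iff] at hmp
    omega
  exact descent q p hq hp hpq hq2 k hk N.natAbs N rfl hN0 hoddv g hdvdZ
end

section
/- If q ≡ 3 (mod 4) is prime and m = |α|² ∈ ℤ for some α ∈ ℚ(ξ_q), then every prime p ≠ q dividing the square-free part of m is a quadratic residue modulo q. -/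
open Polynomial

-- arithmetic lemma: non-square mod q gives p^j ≡ -1 (mod q)
lemma aux_pow_mod (q p : ℕ) (hq : q.Prime) (hq2 : 2 < q) (hp : p.Prime) (hpq : p ≠ q)
    (hns : ¬ IsSquare (p : ZMod q)) : ∃ j k : ℕ, p ^ j = q * k + (q - 1) := by
  haveI : Fact q.Prime := ⟨hq⟩
  have hp0 : (p : ZMod q) ≠ 0 := by
    rw [Ne, ZMod.natCast_eq_zero_iff]
    exact fun h => hpq (((Nat.prime_dvd_prime_iff_eq hq hp).mp h).symm)
  set u : (ZMod q)ˣ := (isUnit_iff_ne_zero.mpr hp0).unit with hu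
  have huv : (u : ZMod q) = (p : ZMod q) := (isUnit_iff_ne_zero.mpr hp0).unit_spec
  have hf : 0 < orderOf u := orderOf_pos u
  rcases Nat.even_or_odd (orderOf u) with he | ho
  · -- f even
    obtain ⟨j, hj⟩ := he
    have hj0 : 0 < j := by omega
    have hx2 : (u ^ j) * (u ^ j) = 1 := by
      rw [← pow_add, ← hj, pow_orderOf_eq_one]
    have hx1 : u ^ j ≠ 1 := by
      intro h
      have := orderOf_dvd_of_pow_eq_one h
      have := Nat.le_of_dvd hj0 this
      omega
    have hval : ((p : ZMod q)) ^ j * ((p : ZMod q)) ^ j = 1 := by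
      have := congrArg (Units.val) hx2
      push_cast at this
      rwa [huv] at this
    have : ((p : ZMod q)) ^ j = 1 ∨ ((p : ZMod q)) ^ j = -1 :=
      mul_self_eq_one_iff.mp hval
    have hne1 : ((p : ZMod q)) ^ j ≠ 1 := by
      intro h
      apply hx1
      ext
      push_cast
      rw [huv, h]
    have hneg : ((p : ZMod q)) ^ j = -1 := this.resolve_left hne1
    refine ⟨j, p ^ j / q, ?_⟩
    have hcast : ((p ^ j : ℕ) : ZMod q) = ((q - 1 : ℕ) : ZMod q) := by
      push_cast
      rw [hneg, Nat.cast_sub (by omega : 1 ≤ q)]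
      simp
    have := (ZMod.natCast_eq_natCast_iff' _ _ _).mp hcast
    rw [Nat.mod_eq_of_lt (by omega : q - 1 < q)] at this
    conv_lhs => rw [← Nat.div_add_mod (p ^ j) q, this]
  · -- f odd : p is a square, contradiction
    exfalso
    apply hns
    obtain ⟨l, hl⟩ := ho
    have : (u ^ (l + 1)) * (u ^ (l + 1)) = u := by
      rw [← pow_add]
      have : l + 1 + (l + 1) = orderOf u + 1 := by omega
      rw [this, pow_succ, pow_orderOf_eq_one, one_mul]
    have := congrArg (Units.val) this
    push_cast at this
    rw [huv] at this
    exact ⟨(p : ZMod q) ^ (l + 1), this.symm⟩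

-- finite field step
lemma key_ff (q p : ℕ) (hq : q.Prime) (hp : p.Prime) (hpq : p ≠ q) (j k : ℕ)
    (hjk : p ^ j = q * k + (q - 1)) (c : ℕ) (Q : ℤ[X])
    (h : cyclotomic q ℤ ∣ Q * Q.comp (X ^ (q - 1)) - C (c : ℤ)) (hpc : p ∣ c) :
    cyclotomic q (ZMod p) ∣ Q.map (Int.castRingHom (ZMod p)) := by
  haveI : Fact p.Prime := ⟨hp⟩
  set φ := Int.castRingHom (ZMod p)
  set Φ := cyclotomic q (ZMod p) with hΦ
  set Qb := Q.map φ with hQb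
  have hc0 : φ ((c : ℤ)) = 0 := by
    have : ((c : ℤ) : ZMod p) = 0 := by
      rw [ZMod.intCast_zmod_eq_zero_iff_dvd]
      exact_mod_cast Int.natCast_dvd_natCast.mpr hpc
    simpa using this
  have hdvd : Φ ∣ Qb * Qb.comp (X ^ (q - 1)) := by
    have := Polynomial.map_dvd φ h
    rw [Polynomial.map_sub, Polynomial.map_mul, Polynomial.map_comp, map_cyclotomic,
      Polynomial.map_pow, map_X, map_C, hc0, C_0, sub_zero] at this
    exact this
  -- move to AdjoinRoot
  set α := AdjoinRoot.root Φ with hα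
  have hαq : α ^ q = 1 := by
    have h1 : AdjoinRoot.mk Φ (X ^ q - 1) = 0 :=
      AdjoinRoot.mk_eq_zero.mpr (cyclotomic.dvd_X_pow_sub_one q (ZMod p))
    rw [map_sub, map_pow, map_one, AdjoinRoot.mk_X, sub_eq_zero] at h1
    exact h1
  have h0 : aeval α Qb * aeval (α ^ (q - 1)) Qb = 0 := by
    have := AdjoinRoot.mk_eq_zero.mpr hdvd
    rw [← AdjoinRoot.aeval_eq, map_mul, aeval_comp, map_pow, aeval_X] at this
    exact this
  have hexp : (Qb : (ZMod p)[X]) ^ (p ^ j) = expand (ZMod p) (p ^ j) Qb := by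
    have := map_iterateFrobenius_expand p Qb j
    rw [← this]
    have hid : iterateFrobenius (ZMod p) p j = RingHom.id (ZMod p) := by
      ext x; simp [iterateFrobenius_def, ZMod.pow_card_pow]
    rw [hid, Polynomial.map_id]
  have hpow : aeval (α ^ (q - 1)) Qb = (aeval α Qb) ^ (p ^ j) := by
    have e1 : α ^ (q - 1) = α ^ (p ^ j) := by
      rw [hjk, pow_add, pow_mul, hαq, one_pow, one_mul]
    rw [e1, ← expand_aeval, ← hexp, map_pow]
  rw [hpow, ← pow_succ'] at h0
  have hdvd2 : Φ ∣ Qb ^ (p ^ j + 1) := by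
    rw [← AdjoinRoot.mk_eq_zero, ← AdjoinRoot.aeval_eq, map_pow]
    exact h0
  have hsf : Squarefree Φ := by
    have hsep : ((X : (ZMod p)[X]) ^ q - 1).Separable := by
      have hq0 : ((q : ZMod p)) ≠ 0 := by
        rw [Ne, ZMod.natCast_eq_zero_iff]
        exact fun hd => hpq ((Nat.prime_dvd_prime_iff_eq hp hq).mp hd)
      have := separable_X_pow_sub_C (1 : ZMod p) hq0 one_ne_zero
      simpa using this
    exact hsep.squarefree.squarefree_of_dvd (cyclotomic.dvd_X_pow_sub_one q (ZMod p))
  exact (hsf.dvd_pow_iff_dvd (Nat.succ_ne_zero _)).mp hdvd2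

lemma key_main (q p : ℕ) (hq : q.Prime) (hp : p.Prime) (hpq : p ≠ q) (j k : ℕ)
    (hjk : p ^ j = q * k + (q - 1))
    (hconj : cyclotomic q ℤ ∣ (cyclotomic q ℤ).comp (X ^ (q - 1))) :
    ∀ c : ℕ, ∀ Q : ℤ[X], (cyclotomic q ℤ ∣ Q * Q.comp (X ^ (q - 1)) - C (c : ℤ)) →
      Even (c.factorization p) := by
  intro c
  induction c using Nat.strong_induction_on with
  | _ c ih =>
  intro Q h
  rcases eq_or_ne c 0 with rfl | hc0
  · simp
  by_cases hpc : p ∣ c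
  · -- descent
    haveI : Fact p.Prime := ⟨hp⟩
    set Φ := cyclotomic q ℤ with hΦdef
    obtain ⟨Hb, hHb⟩ := key_ff q p hq hp hpq j k hjk c Q h hpc
    obtain ⟨H, rfl⟩ := Polynomial.map_surjective (Int.castRingHom (ZMod p)) (fun x => ZMod.intCast_surjective x) Hb
    have hcoeff : ∀ n, (p : ℤ) ∣ (Q - Φ * H).coeff n := by
      intro n
      have hmap : (Q - Φ * H).map (Int.castRingHom (ZMod p)) = 0 := by
        rw [Polynomial.map_sub, Polynomial.map_mul, map_cyclotomic, ← hHb]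
        · exact sub_self _
      have := congrArg (fun f => Polynomial.coeff f n) hmap
      simp only [coeff_map, coeff_zero] at this
      have h5 : (((Q - Φ * H).coeff n : ℤ) : ZMod p) = 0 := this
      rwa [ZMod.intCast_zmod_eq_zero_iff_dvd] at h5
    obtain ⟨Q₁, hQ₁⟩ : C (p : ℤ) ∣ Q - Φ * H := (C_dvd_iff_dvd_coeff _ _).mpr hcoeff
    have hQeq : Q = Φ * H + C (p : ℤ) * Q₁ := by linear_combination hQ₁
    -- Φ ∣ C p^2 Q₁ Q₁∘ - C c
    have hcomp : Q.comp (X ^ (q - 1))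
        = Φ.comp (X ^ (q - 1)) * H.comp (X ^ (q - 1)) + C (p : ℤ) * Q₁.comp (X ^ (q - 1)) := by
      rw [hQeq]
      simp [add_comp, mul_comp, C_comp]
    have hd1 : Φ ∣ Q.comp (X ^ (q - 1)) - C (p : ℤ) * Q₁.comp (X ^ (q - 1)) := by
      rw [hcomp, add_sub_cancel_right]
      exact hconj.mul_right _
    have hd2 : Φ ∣ Q - C (p : ℤ) * Q₁ := ⟨H, by linear_combination hQ₁⟩
    have h5 : Φ ∣ Q * Q.comp (X ^ (q - 1)) - C ((p : ℤ) ^ 2) * (Q₁ * Q₁.comp (X ^ (q - 1))) := by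
      have hsum := dvd_add (hd1.mul_left Q) (hd2.mul_left (C (p : ℤ) * Q₁.comp (X ^ (q - 1))))
      have e : Q * (Q.comp (X ^ (q - 1)) - C (p : ℤ) * Q₁.comp (X ^ (q - 1)))
          + C (p : ℤ) * Q₁.comp (X ^ (q - 1)) * (Q - C (p : ℤ) * Q₁)
          = Q * Q.comp (X ^ (q - 1)) - C ((p : ℤ) ^ 2) * (Q₁ * Q₁.comp (X ^ (q - 1))) := by
        rw [C_pow]
        ring
      rwa [e] at hsum
    have h2 : Φ ∣ C ((p : ℤ) ^ 2) * (Q₁ * Q₁.comp (X ^ (q - 1))) - C (c : ℤ) := by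
      have := dvd_sub h h5
      have e : Q * Q.comp (X ^ (q - 1)) - C (c : ℤ)
          - (Q * Q.comp (X ^ (q - 1)) - C ((p : ℤ) ^ 2) * (Q₁ * Q₁.comp (X ^ (q - 1))))
          = C ((p : ℤ) ^ 2) * (Q₁ * Q₁.comp (X ^ (q - 1))) - C (c : ℤ) := by ring
      rwa [e] at this
    -- p^2 ∣ c
    have hp2c : p ^ 2 ∣ c := by
      haveI : Fact (1 < p ^ 2) := ⟨by nlinarith [hp.two_le]⟩
      have hmap := Polynomial.map_dvd (Int.castRingHom (ZMod (p ^ 2))) h2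
      rw [Polynomial.map_sub, Polynomial.map_mul, map_cyclotomic, map_C, map_C] at hmap
      have hpz : (Int.castRingHom (ZMod (p ^ 2))) ((p : ℤ) ^ 2) = 0 := by
        have : (((p ^ 2 : ℕ) : ℤ) : ZMod (p ^ 2)) = 0 := by
          rw [ZMod.intCast_zmod_eq_zero_iff_dvd]
        simpa using this
      rw [hpz, C_0, zero_mul, zero_sub, dvd_neg] at hmap
      by_contra hnd
      have hcz : (Int.castRingHom (ZMod (p ^ 2))) ((c : ℤ)) ≠ 0 := by
        intro hz
        apply hnd
        have : (((c : ℕ) : ℤ) : ZMod (p ^ 2)) = 0 := by simpa using hz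
        rw [ZMod.intCast_zmod_eq_zero_iff_dvd] at this
        exact_mod_cast this
      obtain ⟨G₂, hG₂⟩ := hmap
      have hG₂0 : G₂ ≠ 0 := by
        rintro rfl
        rw [mul_zero] at hG₂
        exact hcz (by simpa using congrArg (fun f => Polynomial.coeff f 0) hG₂)
      have := congrArg natDegree hG₂
      rw [natDegree_C, natDegree_mul' (by
        rw [(cyclotomic.monic q (ZMod (p ^ 2))).leadingCoeff, one_mul]
        exact leadingCoeff_ne_zero.mpr hG₂0)] at this
      rw [natDegree_cyclotomic, Nat.totient_prime hq] at this
      have hq2 : 2 ≤ q := hq.two_le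
      omega
    obtain ⟨c', rfl⟩ := hp2c
    have hc'0 : c' ≠ 0 := by rintro rfl; simp at hc0
    -- divide by p^2
    have h3 : Φ ∣ Q₁ * Q₁.comp (X ^ (q - 1)) - C (c' : ℤ) := by
      have h4 : Φ ∣ C ((p : ℤ) ^ 2) * (Q₁ * Q₁.comp (X ^ (q - 1)) - C (c' : ℤ)) := by
        have e2 : ((p ^ 2 * c' : ℕ) : ℤ) = (p : ℤ) ^ 2 * (c' : ℤ) := by push_cast; ring
        have e : C ((p : ℤ) ^ 2) * (Q₁ * Q₁.comp (X ^ (q - 1)) - C (c' : ℤ))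
            = C ((p : ℤ) ^ 2) * (Q₁ * Q₁.comp (X ^ (q - 1))) - C ((p ^ 2 * c' : ℕ) : ℤ) := by
          rw [e2, C_mul, mul_sub]
        rw [e]
        exact h2
      -- cancel the unit over ℚ
      have hmono := cyclotomic.monic q ℤ
      rw [← Polynomial.map_dvd_map (Int.castRingHom ℚ) Int.cast_injective hmono]
      rw [← Polynomial.map_dvd_map (Int.castRingHom ℚ) Int.cast_injective hmono] at h4
      rw [Polynomial.map_mul, map_C] at h4
      have hu : IsUnit (C ((Int.castRingHom ℚ) ((p : ℤ) ^ 2))) := by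
        rw [Polynomial.isUnit_C]
        simp only [map_pow]
        apply IsUnit.pow
        norm_num [hp.ne_zero]
      exact (IsUnit.dvd_mul_left hu).mp h4
    have hrec := ih c' (by
      have h1p : 1 < p ^ 2 := by nlinarith [hp.two_le]
      calc c' < p ^ 2 * c' := by
            exact lt_mul_of_one_lt_left (Nat.pos_of_ne_zero hc'0) h1p
        _ = _ := rfl) Q₁ h3
    rw [Nat.factorization_mul (pow_ne_zero 2 hp.ne_zero) hc'0]
    have e : (p ^ 2).factorization p = 2 := by
      rw [hp.factorization_pow]
      simp
    simp only [Finsupp.coe_add, Pi.add_apply]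
    rw [e, Nat.even_add]
    simpa using hrec
  · rw [Nat.factorization_eq_zero_of_not_dvd hpc]
    exact Even.zero

lemma cyclo_conj (q : ℕ) (hq : q.Prime) : 
    cyclotomic q ℤ ∣ (cyclotomic q ℤ).comp (X ^ (q - 1)) := by
  have hq0 : q ≠ 0 := hq.ne_zero
  have hqpos : 0 < q := hq.pos
  set ζ : ℂ := Complex.exp (2 * Real.pi * Complex.I / q) with hζdef
  have hζ : IsPrimitiveRoot ζ q := Complex.isPrimitiveRoot_exp q hq0
  have hζ' : IsPrimitiveRoot (ζ ^ (q - 1)) q := by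
    apply hζ.pow_of_coprime
    exact (Nat.coprime_self_sub_left (by omega)).mpr (Nat.coprime_one_left q)
  rw [← Polynomial.map_dvd_map (Int.castRingHom ℚ) Int.cast_injective (cyclotomic.monic q ℤ),
    Polynomial.map_comp, map_cyclotomic, Polynomial.map_pow, map_X]
  rw [cyclotomic_eq_minpoly_rat hζ hqpos]
  apply minpoly.dvd
  rw [aeval_comp, map_pow, aeval_X, ← cyclotomic_eq_minpoly_rat hζ hqpos]
  rw [aeval_def, ← eval_map, map_cyclotomic]
  exact hζ'.isRoot_cyclotomic hqpos

theorem norm_cyclotomic_qr_condition (q : ℕ) (hq : q.Prime) (hq3 : q % 4 = 3)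
    (P : Polynomial ℚ) (m : ℕ)
    (hm : (‖Polynomial.aeval (Complex.exp (2 * Real.pi * Complex.I / q)) P‖) ^ 2
      = (m : ℝ)) :
    ∀ p : ℕ, p.Prime → p ≠ q → ¬ Even (m.factorization p) →
      IsSquare ((p : ZMod q)) := by
  intro p hp hpq hodd
  by_contra hns
  have hm0 : m ≠ 0 := by rintro rfl; simp at hodd
  have hq2 : 2 < q := by
    rcases Nat.lt_or_ge q 3 with h | h
    · interval_cases q <;> omega
    · omega
  have hq0 : q ≠ 0 := by omega
  set ζ : ℂ := Complex.exp (2 * Real.pi * Complex.I / q) with hζdef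
  have hζ : IsPrimitiveRoot ζ q := Complex.isPrimitiveRoot_exp q hq0
  have hζ0 : ζ ≠ 0 := hζ.ne_zero hq0
  -- conj ζ = ζ ^ (q-1)
  have hconjζ : (starRingEnd ℂ) ζ = ζ ^ (q - 1) := by
    have h1 : (starRingEnd ℂ) ζ = Complex.exp (-(2 * Real.pi * Complex.I / q)) := by
      rw [hζdef, ← Complex.exp_conj]
      congr 1
      simp [map_div₀, Complex.conj_I, map_ofNat]
      ring
    have h2 : ζ * ζ ^ (q - 1) = 1 := by
      rw [← pow_succ']
      have : q - 1 + 1 = q := by omega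
      rw [this, hζ.pow_eq_one]
    have h3 : ζ * (starRingEnd ℂ) ζ = 1 := by
      rw [h1, hζdef, ← Complex.exp_add]
      simp
    exact mul_left_cancel₀ hζ0 (h3.trans h2.symm)
  -- m = aeval ζ (P * P.comp (X^(q-1)))
  have hmain : (m : ℂ) = aeval ζ (P * P.comp (X ^ (q - 1))) := by
    have hz : ((m : ℝ) : ℂ) = aeval ζ P * (starRingEnd ℂ) (aeval ζ P) := by
      rw [Complex.mul_conj, ← hm]
      push_cast [Complex.sq_norm]
      norm_num [Complex.sq_norm]
    have hconjaeval : (starRingEnd ℂ) (aeval ζ P) = aeval ((starRingEnd ℂ) ζ) P := by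
      rw [aeval_def, aeval_def, hom_eval₂]
      congr 1
      exact Subsingleton.elim _ _
    rw [map_mul, aeval_comp, map_pow, aeval_X]
    rw [← hconjζ, ← hconjaeval]
    exact_mod_cast hz
  -- cyclotomic q ℚ divides
  have hdvdQ : cyclotomic q ℚ ∣ P * P.comp (X ^ (q - 1)) - C (m : ℚ) := by
    rw [cyclotomic_eq_minpoly_rat hζ hq.pos]
    apply minpoly.dvd
    rw [map_sub, aeval_C]
    rw [← hmain]
    simp
  -- clear denominators
  obtain ⟨b, hb⟩ := IsLocalization.integerNormalization_map_to_map (nonZeroDivisors ℤ)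
    (S := ℚ) P
  set Q : ℤ[X] := IsLocalization.integerNormalization (nonZeroDivisors ℤ) P with hQdef
  set e : ℤ := (b : ℤ) with hedef
  have he0 : e ≠ 0 := nonZeroDivisors.coe_ne_zero b
  have hbQ : Q.map (Int.castRingHom ℚ) = C ((e : ℚ)) * P := by
    rw [hQdef]
    have : (algebraMap ℤ ℚ) = Int.castRingHom ℚ := rfl
    rw [← this, hb]
    rw [← Int.cast_smul_eq_zsmul ℚ e P, smul_eq_C_mul]
  set c : ℕ := e.natAbs ^ 2 * m with hcdef
  have hcz : ((c : ℕ) : ℤ) = e ^ 2 * (m : ℤ) := by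
    rw [hcdef]
    push_cast
    rw [sq_abs]
  have hdvdZ : cyclotomic q ℤ ∣ Q * Q.comp (X ^ (q - 1)) - C (c : ℤ) := by
    rw [← Polynomial.map_dvd_map (Int.castRingHom ℚ) Int.cast_injective (cyclotomic.monic q ℤ),
      Polynomial.map_sub, Polynomial.map_mul, Polynomial.map_comp, Polynomial.map_pow, map_X,
      map_C, map_cyclotomic, hbQ]
    have hcc : (Int.castRingHom ℚ) ((c : ℕ) : ℤ) = (e : ℚ) ^ 2 * (m : ℚ) := by
      rw [hcz]
      simp
    have e1 : (C ((e : ℚ)) * P) * ((C ((e : ℚ)) * P).comp (X ^ (q - 1)))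
        - C ((Int.castRingHom ℚ) ((c : ℕ) : ℤ))
        = C ((e : ℚ)) ^ 2 * (P * P.comp (X ^ (q - 1)) - C (m : ℚ)) := by
      rw [mul_comp, C_comp, hcc, C_mul, C_pow]
      ring
    rw [e1]
    exact hdvdQ.mul_left _
  obtain ⟨j, k, hjk⟩ := aux_pow_mod q p hq hq2 hp hpq hns
  have hev := key_main q p hq hp hpq j k hjk (cyclo_conj q hq) c Q hdvdZ
  have hea : e.natAbs ≠ 0 := Int.natAbs_ne_zero.mpr he0
  have hA : Even ((e.natAbs ^ 2).factorization p) := by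
    rw [Nat.factorization_pow, Finsupp.smul_apply, smul_eq_mul]
    exact even_two_mul _
  rw [hcdef, Nat.factorization_mul (pow_ne_zero 2 hea) hm0, Finsupp.coe_add, Pi.add_apply,
    Nat.even_add] at hev
  exact hodd (hev.mp hA)
end
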